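/- arXiv:2507.12781 — 7 statements merged into one kernel-verified Lean document; each statement's English description precedes it below -/
import Mathlib

section
/- Let A ⊆ B ⊆ C be ℕ-graded rings such that C₀ is a finitely generated A₀-module, A is generated over A₀ by its degree-one component A₁, and both A and C are Noetherian. Then B is a finitely generated A-module if and only if there exists k ≥ 0 such that for all n ≥ k, the degree-n component Bₙ is contained in A_{n-k}·C_k (the A₀-submodule of Cₙ generated by products of elements of A_{n-k} and C_k). -/
set_option maxHeartbeats 1000000
set_option synthInstance.maxHeartbeats 400000

open DirectSum

section Aux
variable {C : Type} [CommRing C] (𝒞 : ℕ → AddSubgroup C) [GradedRing 𝒞] (A : Subring C)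

lemma aux_mem_mon_closure
    (hA1 : A ≤ Subring.closure (((A : Set C) ∩ (𝒞 0 : Set C)) ∪ ((A : Set C) ∩ (𝒞 1 : Set C))))
    {a : C} (ha : a ∈ A) :
    a ∈ AddSubgroup.closure {y : C | ∃ l : List C,
      (∀ z ∈ l, z ∈ ((A : Set C) ∩ (𝒞 0 : Set C)) ∪ ((A : Set C) ∩ (𝒞 1 : Set C))) ∧ y = l.prod} := by
  set S : Set C := ((A : Set C) ∩ (𝒞 0 : Set C)) ∪ ((A : Set C) ∩ (𝒞 1 : Set C)) with hS
  set Mon : Set C := {y : C | ∃ l : List C, (∀ z ∈ l, z ∈ S) ∧ y = l.prod} with hMon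
  have hmul : ∀ x ∈ AddSubgroup.closure Mon, ∀ y ∈ AddSubgroup.closure Mon,
      x * y ∈ AddSubgroup.closure Mon := by
    intro x hx
    induction hx using AddSubgroup.closure_induction with
    | mem x hx =>
      intro y hy
      induction hy using AddSubgroup.closure_induction with
      | mem y hy =>
        obtain ⟨l, hl, rfl⟩ := hx
        obtain ⟨l', hl', rfl⟩ := hy
        refine AddSubgroup.subset_closure ⟨l ++ l', ?_, (List.prod_append ..).symm⟩
        intro z hz
        rcases List.mem_append.mp hz with h | h
        · exact hl z h
        · exact hl' z h
      | zero => simpa using (AddSubgroup.closure Mon).zero_mem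
      | add y₁ y₂ _ _ h1 h2 => rw [mul_add]; exact (AddSubgroup.closure Mon).add_mem h1 h2
      | neg y _ h => rw [mul_neg]; exact (AddSubgroup.closure Mon).neg_mem h
    | zero => intro y _; simpa using (AddSubgroup.closure Mon).zero_mem
    | add x₁ x₂ _ _ h1 h2 =>
      intro y hy; rw [add_mul]
      exact (AddSubgroup.closure Mon).add_mem (h1 y hy) (h2 y hy)
    | neg x _ h =>
      intro y hy; rw [neg_mul]
      exact (AddSubgroup.closure Mon).neg_mem (h y hy)
  have hone : (1 : C) ∈ AddSubgroup.closure Mon :=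
    AddSubgroup.subset_closure ⟨[], by simp, by simp⟩
  let D : Subring C := Subring.mk' (AddSubgroup.closure Mon : Set C)
    ⟨⟨(AddSubgroup.closure Mon : Set C), fun hx hy => hmul _ hx _ hy⟩, hone⟩
    (AddSubgroup.closure Mon) rfl rfl
  have : Subring.closure S ≤ D := by
    rw [Subring.closure_le]
    intro z hz
    exact AddSubgroup.subset_closure ⟨[z], by simpa using hz, by simp⟩
  exact this (hA1 ha)

lemma aux_factor_one
    (hAgr : ∀ x ∈ A, ∀ n, (DirectSum.decompose 𝒞 x n : C) ∈ A)
    (hA1 : A ≤ Subring.closure (((A : Set C) ∩ (𝒞 0 : Set C)) ∪ ((A : Set C) ∩ (𝒞 1 : Set C))))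
    (m : ℕ) {a : C} (ha : a ∈ A) (hd : a ∈ 𝒞 (m + 1)) :
    a ∈ AddSubgroup.closure {y : C | ∃ p q, p ∈ A ∧ p ∈ 𝒞 1 ∧ q ∈ A ∧ q ∈ 𝒞 m ∧ y = p * q} := by
  set S : Set C := ((A : Set C) ∩ (𝒞 0 : Set C)) ∪ ((A : Set C) ∩ (𝒞 1 : Set C)) with hS
  set E : Set C := {y : C | ∃ p q, p ∈ A ∧ p ∈ 𝒞 1 ∧ q ∈ A ∧ q ∈ 𝒞 m ∧ y = p * q} with hE
  -- key : projection of a monomial lies in closure E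
  have key : ∀ l : List C, (∀ z ∈ l, z ∈ S) →
      (DirectSum.decompose 𝒞 l.prod (m + 1) : C) ∈ AddSubgroup.closure E := by
    intro l
    induction l with
    | nil =>
      intro _
      simp only [List.prod_nil]
      rw [DirectSum.decompose_of_mem_ne 𝒞 (SetLike.one_mem_graded 𝒞) (by omega : (0:ℕ) ≠ m+1)]
      exact (AddSubgroup.closure E).zero_mem
    | cons z l ih =>
      intro hl
      have hzS : z ∈ S := hl z (List.mem_cons_self ..)
      have hl' : ∀ w ∈ l, w ∈ S := fun w hw => hl w (List.mem_cons_of_mem _ hw)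
      have hlA : l.prod ∈ A := by
        refine Subring.list_prod_mem _ ?_
        intro w hw
        rcases hl' w hw with h | h
        · exact h.1
        · exact h.1
      rw [List.prod_cons]
      rcases hzS with hz | hz
      · -- z has degree 0
        rw [DirectSum.coe_decompose_mul_of_left_mem 𝒞 (m+1) hz.2, if_pos (Nat.zero_le _)]
        have hmap : AddSubgroup.closure E ≤
            (AddSubgroup.closure E).comap (AddMonoidHom.mulLeft z) := by
          rw [AddSubgroup.closure_le]
          rintro y ⟨p, q, hpA, hp1, hqA, hqm, rfl⟩
          refine AddSubgroup.subset_closure ?_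
          refine ⟨p, z * q, hpA, hp1, A.mul_mem hz.1 hqA, ?_, by simp [AddMonoidHom.coe_mulLeft]; ring⟩
          have := SetLike.mul_mem_graded hz.2 hqm
          rwa [zero_add] at this
        have := hmap (by simpa using ih hl')
        simpa using this
      · -- z has degree 1
        rw [DirectSum.coe_decompose_mul_of_left_mem 𝒞 (m+1) hz.2, if_pos (by omega : 1 ≤ m+1)]
        refine AddSubgroup.subset_closure ?_
        exact ⟨z, _, hz.1, hz.2, hAgr _ hlA _, SetLike.coe_mem _, by rw [show m+1-1 = m from rfl]⟩
  have hmon := aux_mem_mon_closure 𝒞 A hA1 ha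
  have hproj : AddSubgroup.closure {y : C | ∃ l : List C, (∀ z ∈ l, z ∈ S) ∧ y = l.prod} ≤
      (AddSubgroup.closure E).comap (GradedRing.proj 𝒞 (m+1)) := by
    rw [AddSubgroup.closure_le]
    rintro y ⟨l, hl, rfl⟩
    simpa [GradedRing.proj_apply] using key l hl
  have := hproj hmon
  simp only [AddSubgroup.mem_comap, GradedRing.proj_apply] at this
  rwa [DirectSum.decompose_of_mem_same 𝒞 hd] at this

lemma aux_factor
    (hAgr : ∀ x ∈ A, ∀ n, (DirectSum.decompose 𝒞 x n : C) ∈ A)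
    (hA1 : A ≤ Subring.closure (((A : Set C) ∩ (𝒞 0 : Set C)) ∪ ((A : Set C) ∩ (𝒞 1 : Set C))))
    (d : ℕ) : ∀ (m : ℕ) (a : C), a ∈ A → a ∈ 𝒞 (d + m) →
    a ∈ AddSubgroup.closure {y : C | ∃ p q, p ∈ A ∧ p ∈ 𝒞 d ∧ q ∈ A ∧ q ∈ 𝒞 m ∧ y = p * q} := by
  induction d with
  | zero =>
    intro m a ha hd
    rw [zero_add] at hd
    exact AddSubgroup.subset_closure
      ⟨1, a, A.one_mem, SetLike.one_mem_graded 𝒞, ha, hd, (one_mul a).symm⟩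
  | succ d ih =>
    intro m a ha hd
    have hd' : a ∈ 𝒞 ((d + m) + 1) := by rwa [show d + 1 + m = (d + m) + 1 by omega] at hd
    have h1 := aux_factor_one 𝒞 A hAgr hA1 (d + m) ha hd'
    set T : Set C := {y : C | ∃ p q, p ∈ A ∧ p ∈ 𝒞 (d+1) ∧ q ∈ A ∧ q ∈ 𝒞 m ∧ y = p * q} with hT
    have hle : AddSubgroup.closure {y : C | ∃ p q, p ∈ A ∧ p ∈ 𝒞 1 ∧ q ∈ A ∧ q ∈ 𝒞 (d+m) ∧ y = p * q}
        ≤ AddSubgroup.closure T := by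
      rw [AddSubgroup.closure_le]
      rintro y ⟨p, q, hpA, hp1, hqA, hqdm, rfl⟩
      -- q ∈ closure of d-m factorizations
      have hq := ih m q hqA hqdm
      -- multiply by p on the left
      have hmap : AddSubgroup.closure {y : C | ∃ p' q', p' ∈ A ∧ p' ∈ 𝒞 d ∧ q' ∈ A ∧ q' ∈ 𝒞 m ∧ y = p' * q'}
          ≤ (AddSubgroup.closure T).comap (AddMonoidHom.mulLeft p) := by
        rw [AddSubgroup.closure_le]
        rintro w ⟨p', q', hp'A, hp'd, hq'A, hq'm, rfl⟩
        refine AddSubgroup.subset_closure ⟨p * p', q', A.mul_mem hpA hp'A, ?_, hq'A, hq'm,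
          by simp [AddMonoidHom.coe_mulLeft]; ring⟩
        have := SetLike.mul_mem_graded hp1 hp'd
        rwa [show (1 : ℕ) + d = d + 1 by omega] at this
      simpa using hmap hq
    exact hle h1

lemma aux_forward (B : Subring C)
    (hAgr : ∀ x ∈ A, ∀ n, (DirectSum.decompose 𝒞 x n : C) ∈ A)
    (hA1 : A ≤ Subring.closure (((A : Set C) ∩ (𝒞 0 : Set C)) ∪ ((A : Set C) ∩ (𝒞 1 : Set C))))
    (s : Finset C) (hrep : ∀ b ∈ B, ∃ a : C → C, (∀ x ∈ s, a x ∈ A) ∧ b = ∑ x ∈ s, a x * x) :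
    ∃ k : ℕ, ∀ n ≥ k, ∀ b ∈ B, b ∈ 𝒞 n →
      b ∈ AddSubgroup.closure {y | ∃ a c, a ∈ A ∧ a ∈ 𝒞 (n - k) ∧ c ∈ 𝒞 k ∧ y = a * c} := by
  classical
  refine ⟨s.sup (fun x => (DirectSum.decompose 𝒞 x).support.sup id), ?_⟩
  set k := s.sup (fun x => (DirectSum.decompose 𝒞 x).support.sup id) with hk
  intro n hn b hbB hbn
  set G := AddSubgroup.closure {y : C | ∃ a c, a ∈ A ∧ a ∈ 𝒞 (n - k) ∧ c ∈ 𝒞 k ∧ y = a * c} with hG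
  obtain ⟨a, haA, hsum⟩ := hrep b hbB
  have hb_eq : b = ∑ x ∈ s, ∑ j ∈ (DirectSum.decompose 𝒞 x).support,
      (DirectSum.decompose 𝒞 (a x) (n - j) : C) * (DirectSum.decompose 𝒞 x j : C) := by
    conv_lhs => rw [← DirectSum.decompose_of_mem_same 𝒞 hbn]
    rw [hsum, DirectSum.decompose_sum, DFinsupp.finset_sum_apply,
      AddSubmonoidClass.coe_finset_sum]
    refine Finset.sum_congr rfl ?_
    intro x hx
    have hax : a x * x = ∑ j ∈ (DirectSum.decompose 𝒞 x).support,
        a x * (DirectSum.decompose 𝒞 x j : C) := by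
      rw [← Finset.mul_sum, DirectSum.sum_support_decompose]
    rw [hax, DirectSum.decompose_sum, DFinsupp.finset_sum_apply,
      AddSubmonoidClass.coe_finset_sum]
    refine Finset.sum_congr rfl ?_
    intro j hj
    have hjk : j ≤ n := by
      have h1 : j ≤ (DirectSum.decompose 𝒞 x).support.sup id := Finset.le_sup (f := id) hj
      have h2 : (DirectSum.decompose 𝒞 x).support.sup id ≤ k := Finset.le_sup (f := fun x => (DirectSum.decompose 𝒞 x).support.sup id) hx
      omega
    rw [DirectSum.coe_decompose_mul_of_right_mem 𝒞 n (SetLike.coe_mem _), if_pos hjk]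
  rw [hb_eq]
  refine G.sum_mem ?_
  intro x hx
  refine G.sum_mem ?_
  intro j hj
  have hjk : j ≤ k := by
    have h1 : j ≤ (DirectSum.decompose 𝒞 x).support.sup id := Finset.le_sup (f := id) hj
    have h2 : (DirectSum.decompose 𝒞 x).support.sup id ≤ k := Finset.le_sup (f := fun x => (DirectSum.decompose 𝒞 x).support.sup id) hx
    omega
  -- factor the coefficient
  have hmem : (DirectSum.decompose 𝒞 (a x) (n - j) : C) ∈ 𝒞 ((n - k) + (k - j)) := by
    rw [show (n - k) + (k - j) = n - j by omega]
    exact SetLike.coe_mem _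
  have hfac := aux_factor 𝒞 A hAgr hA1 (n - k) (k - j) _ (hAgr _ (haA x hx) (n - j)) hmem
  have hmap : AddSubgroup.closure {y : C | ∃ p q, p ∈ A ∧ p ∈ 𝒞 (n-k) ∧ q ∈ A ∧ q ∈ 𝒞 (k-j) ∧ y = p * q}
      ≤ G.comap (AddMonoidHom.mulRight ((DirectSum.decompose 𝒞 x j : C))) := by
    rw [AddSubgroup.closure_le]
    rintro w ⟨p, q, hpA, hpd, hqA, hqd, rfl⟩
    refine AddSubgroup.subset_closure ⟨p, q * (DirectSum.decompose 𝒞 x j : C), hpA, hpd, ?_,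
      by simp [AddMonoidHom.coe_mulRight]; ring⟩
    have := SetLike.mul_mem_graded hqd (SetLike.coe_mem (DirectSum.decompose 𝒞 x j))
    rwa [show (k - j) + j = k by omega] at this
  simpa using hmap hfac

/-- The degree-zero part of `A`, as a subring of `C`. -/
def auxA0 : Subring C where
  carrier := {x : C | x ∈ A ∧ x ∈ 𝒞 0}
  mul_mem' := fun {a b} ha hb => ⟨A.mul_mem ha.1 hb.1,
    by simpa using SetLike.mul_mem_graded ha.2 hb.2⟩
  one_mem' := ⟨A.one_mem, SetLike.one_mem_graded 𝒞⟩
  add_mem' := fun {a b} ha hb => ⟨A.add_mem ha.1 hb.1, (𝒞 0).add_mem ha.2 hb.2⟩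
  zero_mem' := ⟨A.zero_mem, (𝒞 0).zero_mem⟩
  neg_mem' := fun {a} ha => ⟨A.neg_mem ha.1, (𝒞 0).neg_mem ha.2⟩

lemma auxA0_noetherian
    (hAgr : ∀ x ∈ A, ∀ n, (DirectSum.decompose 𝒞 x n : C) ∈ A)
    (hAnoeth : IsNoetherianRing ↥A) : IsNoetherianRing ↥(auxA0 𝒞 A) := by
  haveI := hAnoeth
  set ψ : ↥A →+* C := (GradedRing.projZeroRingHom 𝒞).comp A.subtype with hψ
  have hrange : ψ.range = auxA0 𝒞 A := by
    ext x
    constructor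
    · rintro ⟨a, rfl⟩
      exact ⟨hAgr _ a.2 0, SetLike.coe_mem _⟩
    · rintro ⟨hxA, hx0⟩
      exact ⟨⟨x, hxA⟩, by
        show (GradedRing.projZeroRingHom 𝒞) x = x
        show (DirectSum.decompose 𝒞 x 0 : C) = x
        exact DirectSum.decompose_of_mem_same 𝒞 hx0⟩
  have := isNoetherianRing_range ψ
  rwa [hrange] at this

lemma aux_pieces
    (hC0 : ∃ s : Finset C, (↑s : Set C) ⊆ (𝒞 0 : Set C) ∧ ∀ c ∈ 𝒞 0,
      ∃ a : C → C, (∀ x ∈ s, a x ∈ A ∧ a x ∈ 𝒞 0) ∧ c = ∑ x ∈ s, a x * x)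
    (hCnoeth : IsNoetherianRing C) (n : ℕ) :
    ∃ u : Finset C, (↑u : Set C) ⊆ (𝒞 n : Set C) ∧
      ∀ x ∈ 𝒞 n, x ∈ Submodule.span ↥(auxA0 𝒞 A) (↑u : Set C) := by
  classical
  haveI := hCnoeth
  obtain ⟨s0, hs0C, hs0rep⟩ := hC0
  set P : Ideal C := Ideal.span ((𝒞 n : Set C)) with hP
  obtain ⟨T, hT⟩ := IsNoetherian.noetherian P
  have hgP : ∀ g ∈ T, g ∈ P := fun g hg => hT ▸ Ideal.subset_span hg
  choose f hf1 hf2 using fun (g : C) (hg : g ∈ P) =>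
    Submodule.mem_span_finite_of_mem_span (by rwa [hP] at hg :
      g ∈ Submodule.span C ((𝒞 n : Set C)))
  set t : Finset C := T.attach.biUnion (fun g => f g.1 (hgP g.1 g.2)) with ht
  have ht_sub : (↑t : Set C) ⊆ (𝒞 n : Set C) := by
    intro e he
    simp only [ht, Finset.coe_biUnion, Finset.mem_coe, Finset.mem_attach, Set.iUnion_true,
      Set.mem_iUnion] at he
    obtain ⟨g, hg⟩ := he
    exact hf1 g.1 (hgP g.1 g.2) hg
  have hPle : P ≤ Ideal.span (↑t : Set C) := by
    rw [← hT, Submodule.span_le]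
    intro g hg
    refine Submodule.span_mono ?_ (hf2 g (hgP g hg))
    intro e he
    simp only [ht, Finset.coe_biUnion, Finset.mem_coe, Finset.mem_attach, Set.iUnion_true,
      Set.mem_iUnion]
    exact ⟨⟨g, hg⟩, he⟩
  refine ⟨(s0 ×ˢ t).image (fun p => p.1 * p.2), ?_, ?_⟩
  · intro w hw
    simp only [Finset.coe_image, Set.mem_image, Finset.mem_coe, Finset.mem_product] at hw
    obtain ⟨⟨y, e⟩, ⟨hy, he⟩, rfl⟩ := hw
    have := SetLike.mul_mem_graded (hs0C hy) (ht_sub he)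
    rwa [zero_add] at this
  · intro x hx
    have hxP : x ∈ Submodule.span C (↑t : Set C) := hPle (Ideal.subset_span hx)
    obtain ⟨g, -, hg⟩ := Submodule.mem_span_finset.mp hxP
    have hx_eq : x = ∑ e ∈ t, (DirectSum.decompose 𝒞 (g e) 0 : C) * e := by
      conv_lhs => rw [← DirectSum.decompose_of_mem_same 𝒞 hx]
      rw [← hg, DirectSum.decompose_sum, DFinsupp.finset_sum_apply,
        AddSubmonoidClass.coe_finset_sum]
      refine Finset.sum_congr rfl ?_
      intro e he
      rw [smul_eq_mul,
        DirectSum.coe_decompose_mul_of_right_mem 𝒞 n (ht_sub he), if_pos le_rfl,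
        Nat.sub_self]
    rw [hx_eq]
    refine Submodule.sum_mem _ ?_
    intro e he
    obtain ⟨ae, haeprop, haesum⟩ := hs0rep _ (SetLike.coe_mem (DirectSum.decompose 𝒞 (g e) 0))
    rw [haesum, Finset.sum_mul]
    refine Submodule.sum_mem _ ?_
    intro y hy
    have hmem : y * e ∈ Submodule.span ↥(auxA0 𝒞 A)
        ((↑((s0 ×ˢ t).image (fun p => p.1 * p.2)) : Set C)) := by
      refine Submodule.subset_span ?_
      simp only [Finset.coe_image, Set.mem_image, Finset.mem_coe, Finset.mem_product]
      exact ⟨⟨y, e⟩, ⟨hy, he⟩, rfl⟩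
    have := Submodule.smul_mem _ (⟨ae y, (haeprop y hy).1, (haeprop y hy).2⟩ : ↥(auxA0 𝒞 A)) hmem
    simpa [Subring.smul_def, smul_eq_mul, mul_assoc] using this

end Aux

/-- Lemma (graded finiteness criterion). Let `A ⊆ B ⊆ C` be ℕ-graded rings (realised as
subrings `A ≤ B` of a ring `C` graded by `𝒞`, with `A` and `B` graded subrings). Suppose
`C₀` is a finitely generated `A₀`-module, `A = A₀[A₁]`, and `A` and `C` are Noetherian.
Then `B` is a finitely generated `A`-module iff there is `k ≥ 0` such that for all `n ≥ k`,
`Bₙ ⊆ A_{n-k}·C_k` (the additive group generated by products, which is the `A₀`-submodule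
generated by products since `A₀·A_{n-k} ⊆ A_{n-k}`). -/
theorem graded_fg_criterion {C : Type} [CommRing C] (𝒞 : ℕ → AddSubgroup C) [GradedRing 𝒞]
    (A B : Subring C) (hAB : A ≤ B)
    (hAgr : ∀ x ∈ A, ∀ n, (DirectSum.decompose 𝒞 x n : C) ∈ A)
    (hBgr : ∀ x ∈ B, ∀ n, (DirectSum.decompose 𝒞 x n : C) ∈ B)
    (hC0 : ∃ s : Finset C, (↑s : Set C) ⊆ (𝒞 0 : Set C) ∧ ∀ c ∈ 𝒞 0,
      ∃ a : C → C, (∀ x ∈ s, a x ∈ A ∧ a x ∈ 𝒞 0) ∧ c = ∑ x ∈ s, a x * x)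
    (hA1 : A ≤ Subring.closure (((A : Set C) ∩ (𝒞 0 : Set C)) ∪ ((A : Set C) ∩ (𝒞 1 : Set C))))
    (hAnoeth : IsNoetherianRing A) (hCnoeth : IsNoetherianRing C) :
    (∃ s : Finset C, (↑s : Set C) ⊆ (B : Set C) ∧ ∀ b ∈ B,
        ∃ a : C → C, (∀ x ∈ s, a x ∈ A) ∧ b = ∑ x ∈ s, a x * x)
      ↔ ∃ k : ℕ, ∀ n ≥ k, ∀ b ∈ B, b ∈ 𝒞 n →
        b ∈ AddSubgroup.closure {y | ∃ a c, a ∈ A ∧ a ∈ 𝒞 (n - k) ∧ c ∈ 𝒞 k ∧ y = a * c} := by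
  classical
  constructor
  · rintro ⟨s, _, hrep⟩
    exact aux_forward 𝒞 A B hAgr hA1 s hrep
  · rintro ⟨k, hk⟩
    haveI := hAnoeth
    haveI := auxA0_noetherian 𝒞 A hAgr hAnoeth
    set A0 : Subring C := auxA0 𝒞 A with hA0
    -- graded pieces are spanned over A0 by finitely many elements
    choose u hu_sub hu_span using aux_pieces 𝒞 A hC0 hCnoeth
    -- B as an A-submodule of C
    set BA : Submodule ↥A C :=
      { carrier := (B : Set C)
        add_mem' := fun hx hy => B.add_mem hx hy
        zero_mem' := B.zero_mem
        smul_mem' := fun c {x} hx => by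
          simpa [Subring.smul_def, smul_eq_mul] using B.mul_mem (hAB c.2) hx } with hBA
    -- the degree-n part of B as an A0-submodule of C
    have hBfg : ∀ n : ℕ, ∃ v : Finset C,
        (↑v : Set C) ⊆ (B : Set C) ∧
        Submodule.span ↥A0 (↑v : Set C) =
          ({ carrier := {x : C | x ∈ B ∧ x ∈ 𝒞 n}
             add_mem' := fun hx hy => ⟨B.add_mem hx.1 hy.1, (𝒞 n).add_mem hx.2 hy.2⟩
             zero_mem' := ⟨B.zero_mem, (𝒞 n).zero_mem⟩
             smul_mem' := fun c {x} hx => by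
               refine ⟨?_, ?_⟩
               · simpa [Subring.smul_def, smul_eq_mul] using B.mul_mem (hAB c.2.1) hx.1
               · have := SetLike.mul_mem_graded c.2.2 hx.2
                 rw [zero_add] at this
                 simpa [Subring.smul_def, smul_eq_mul] using this } : Submodule ↥A0 C) := by
      intro n
      set Bn : Submodule ↥A0 C :=
        { carrier := {x : C | x ∈ B ∧ x ∈ 𝒞 n}
          add_mem' := fun hx hy => ⟨B.add_mem hx.1 hy.1, (𝒞 n).add_mem hx.2 hy.2⟩
          zero_mem' := ⟨B.zero_mem, (𝒞 n).zero_mem⟩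
          smul_mem' := fun c {x} hx => by
            refine ⟨?_, ?_⟩
            · simpa [Subring.smul_def, smul_eq_mul] using B.mul_mem (hAB c.2.1) hx.1
            · have := SetLike.mul_mem_graded c.2.2 hx.2
              rw [zero_add] at this
              simpa [Subring.smul_def, smul_eq_mul] using this }
      have hle : Bn ≤ Submodule.span ↥A0 (↑(u n) : Set C) := fun x hx => hu_span n x hx.2
      have hN : IsNoetherian ↥A0 ↥(Submodule.span ↥A0 (↑(u n) : Set C)) :=
        isNoetherian_of_fg_of_noetherian _ ⟨u n, rfl⟩
      obtain ⟨v, hv⟩ := isNoetherian_submodule.mp hN Bn hle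
      exact ⟨v, fun x hx => (hv ▸ Submodule.subset_span hx : x ∈ Bn).1, hv⟩
    choose v hvB hvspan using hBfg
    -- the A-module generated by the degree-k piece
    set M : Submodule ↥A C := Submodule.span ↥A ((𝒞 k : Set C)) with hM
    have hA0span_le : ∀ (S : Finset C) (x : C), x ∈ Submodule.span ↥A0 (↑S : Set C) →
        x ∈ Submodule.span ↥A (↑S : Set C) := by
      intro S x hx
      obtain ⟨g, -, hg⟩ := Submodule.mem_span_finset.mp hx
      rw [← hg]
      refine Submodule.sum_mem _ ?_
      intro i hi
      have : ((g i : C)) • i ∈ Submodule.span ↥A (↑S : Set C) := by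
        exact Submodule.smul_mem _ (⟨(g i : C), (g i).2.1⟩ : ↥A) (Submodule.subset_span hi)
      simpa [Subring.smul_def, smul_eq_mul] using this
    have hMsp : Submodule.span ↥A (↑(u k) : Set C) = M := by
      refine le_antisymm (Submodule.span_le.mpr fun x hx =>
        Submodule.subset_span (hu_sub k hx)) (Submodule.span_le.mpr ?_)
      intro x hx
      exact hA0span_le (u k) x (hu_span k x hx)
    have hMfg : M.FG := ⟨u k, hMsp⟩
    haveI hMnoeth : IsNoetherian ↥A ↥M := isNoetherian_of_fg_of_noetherian _ hMfg
    obtain ⟨w, hw⟩ := isNoetherian_submodule.mp hMnoeth (BA ⊓ M) inf_le_right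
    have hwB : (↑w : Set C) ⊆ (B : Set C) := by
      intro x hx
      have : x ∈ BA ⊓ M := hw ▸ Submodule.subset_span hx
      exact this.1
    refine ⟨w ∪ (Finset.range k).biUnion v, ?_, ?_⟩
    · intro x hx
      rcases Finset.mem_union.mp hx with h | h
      · exact hwB h
      · obtain ⟨n, _, hn⟩ := Finset.mem_biUnion.mp h
        exact hvB n hn
    · intro b hbB
      set s : Finset C := w ∪ (Finset.range k).biUnion v with hs
      have hbspan : b ∈ Submodule.span ↥A (↑s : Set C) := by
        rw [← DirectSum.sum_support_decompose 𝒞 b]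
        refine Submodule.sum_mem _ ?_
        intro n _
        have hbn_B : (DirectSum.decompose 𝒞 b n : C) ∈ B := hBgr b hbB n
        by_cases hnk : n < k
        · -- low degree: use v n
          have hbn : (DirectSum.decompose 𝒞 b n : C) ∈ Submodule.span ↥A0 (↑(v n) : Set C) := by
            rw [hvspan n]
            exact ⟨hbn_B, SetLike.coe_mem _⟩
          have := hA0span_le (v n) _ hbn
          refine Submodule.span_mono ?_ this
          intro x hx
          exact Finset.mem_coe.mpr (Finset.mem_union.mpr (Or.inr
            (Finset.mem_biUnion.mpr ⟨n, Finset.mem_range.mpr hnk, hx⟩)))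
        · -- high degree: lands in BA ⊓ M
          have hcl := hk n (by omega) _ hbn_B (SetLike.coe_mem _)
          have hclM : AddSubgroup.closure
              {y : C | ∃ a c, a ∈ A ∧ a ∈ 𝒞 (n - k) ∧ c ∈ 𝒞 k ∧ y = a * c}
              ≤ M.toAddSubgroup := by
            rw [AddSubgroup.closure_le]
            rintro y ⟨a, c, haA, _, hck, rfl⟩
            have : (⟨a, haA⟩ : ↥A) • c ∈ M :=
              Submodule.smul_mem _ _ (Submodule.subset_span hck)
            simpa [Subring.smul_def, smul_eq_mul] using this
          have hbnM : (DirectSum.decompose 𝒞 b n : C) ∈ BA ⊓ M :=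
            ⟨hbn_B, hclM hcl⟩
          rw [← hw] at hbnM
          refine Submodule.span_mono ?_ hbnM
          intro x hx
          exact Finset.mem_coe.mpr (Finset.mem_union.mpr (Or.inl hx))
      obtain ⟨g, -, hg⟩ := Submodule.mem_span_finset.mp hbspan
      refine ⟨fun x => (g x : C), fun x _ => (g x).2, ?_⟩
      rw [← hg]
      refine Finset.sum_congr rfl ?_
      intro x _
      simp [Subring.smul_def, smul_eq_mul]
end

section
/- Let (R, 𝔪) be a Noetherian local ring and I an 𝔪-primary ideal such that the integral closure of Iⁿ satisfies \overline{Iⁿ} ⊆ I^{m(n)}, where m(n) → ∞ as n → ∞. Then R is analytically unramified, i.e., the 𝔪-adic completion of R is reduced. -/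
set_option maxHeartbeats 1000000
set_option synthInstance.maxHeartbeats 400000
open MvPolynomial IsLocalRing

/-- The linear form in `MvPolynomial (Fin r) R` corresponding to a vector `v : Fin r → R`,
i.e. `∑ i, v i • Tᵢ`. -/
noncomputable def linForm {R : Type} [CommRing R] {r : ℕ} (v : Fin r → R) :
    MvPolynomial (Fin r) R := ∑ i, C (v i) * X i

/-- The Rees algebra `S(M)` of a submodule `M ⊆ F = Rʳ`: the image of the symmetric algebra
of `M` inside the symmetric algebra `S(F) = R[T₁,…,T_r]`, i.e. the `R`-subalgebra generated
by the linear forms coming from `M`. -/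
noncomputable def ReesAlg {R : Type} [CommRing R] {r : ℕ} (M : Submodule R (Fin r → R)) :
    Subalgebra R (MvPolynomial (Fin r) R) :=
  Algebra.adjoin R (linForm '' (M : Set (Fin r → R)))

/-- The degree-`n` graded component `Sₙ(M)` of the Rees algebra `S(M) ⊆ S(F)`. -/
noncomputable def SnM {R : Type} [CommRing R] {r : ℕ} (M : Submodule R (Fin r → R)) (n : ℕ) :
    Submodule R (MvPolynomial (Fin r) R) :=
  (ReesAlg M).toSubmodule ⊓ homogeneousSubmodule (Fin r) R n

/-- `x` lies in the integral closure of the ideal `I`: it satisfies an equation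
`x^p + a₁ x^(p-1) + ⋯ + a_p = 0` with `aᵢ ∈ Iⁱ`. -/
def MemIntClosure {R : Type} [CommRing R] (I : Ideal R) (x : R) : Prop :=
  ∃ (p : ℕ) (a : ℕ → R), 0 < p ∧ (∀ i < p, a i ∈ I ^ (p - i)) ∧
    x ^ p + ∑ i ∈ Finset.range p, a i * x ^ i = 0

/-- Rees's lemma: if `I` is an `𝔪`-primary ideal of a Noetherian local ring `(R, 𝔪)` with
`\overline{Iⁿ} ⊆ I^{m(n)}` where `m(n) → ∞`, then `R` is analytically unramified, i.e. the
`𝔪`-adic completion of `R` is reduced. -/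
theorem rees_lemma {R : Type} [CommRing R] [IsNoetherianRing R] [IsLocalRing R]
    (I : Ideal R) (hprim : I.radical = maximalIdeal R)
    (m : ℕ → ℕ) (hm : Filter.Tendsto m Filter.atTop Filter.atTop)
    (h : ∀ (n : ℕ) (x : R), MemIntClosure (I ^ n) x → x ∈ I ^ (m n)) :
    IsReduced (AdicCompletion (maximalIdeal R) R) := by

  have hIm : I ≤ maximalIdeal R := hprim ▸ Ideal.le_radical
  obtain ⟨c, hc⟩ : ∃ c, (maximalIdeal R) ^ c ≤ I := by
    obtain ⟨c, hc⟩ := Ideal.exists_radical_pow_le_of_fg I (IsNoetherian.noetherian _)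
    exact ⟨c, by rwa [hprim] at hc⟩
  refine ⟨fun f hf => ?_⟩
  obtain ⟨k, hk⟩ := hf
  rcases Nat.eq_zero_or_pos k with hk0 | hkpos
  · subst hk0
    simp only [pow_zero] at hk
    have : Subsingleton (AdicCompletion (maximalIdeal R) R) :=
      subsingleton_of_zero_eq_one hk.symm
    exact Subsingleton.elim _ _
  apply AdicCompletion.ext
  intro t
  rw [AdicCompletion.val_zero]
  obtain ⟨n0, hn0⟩ := (Filter.tendsto_atTop_atTop.mp hm) t
  set n := max n0 t with hndef
  have hmn : t ≤ m n := hn0 n (le_max_left _ _)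
  set N := c * (k * n) + t with hNdef
  have htN : t ≤ N := Nat.le_add_left t _
  obtain ⟨x, hx⟩ := Submodule.mkQ_surjective _ (AdicCompletion.eval (maximalIdeal R) R N f)
  have hxe : AdicCompletion.evalₐ (maximalIdeal R) N f
      = Ideal.Quotient.mk ((maximalIdeal R) ^ N) x := by
    rw [← AdicCompletion.factor_eval_eq_evalₐ _ _ (le_of_eq (Ideal.mul_top _)), ← hx]
    rfl
  have hxk : x ^ k ∈ (maximalIdeal R) ^ N := by
    have h0 : Ideal.Quotient.mk ((maximalIdeal R) ^ N) (x ^ k) = 0 := by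
      rw [map_pow, ← hxe, ← map_pow, hk, map_zero]
    exact Ideal.Quotient.eq_zero_iff_mem.mp h0
  have hpowle : (maximalIdeal R) ^ N ≤ (I ^ n) ^ k := by
    calc (maximalIdeal R) ^ N ≤ (maximalIdeal R) ^ (c * (k * n)) :=
          Ideal.pow_le_pow_right (Nat.le_add_right _ _)
      _ = ((maximalIdeal R) ^ c) ^ (k * n) := by rw [pow_mul]
      _ ≤ I ^ (k * n) := Ideal.pow_right_mono hc _
      _ = (I ^ n) ^ k := by rw [← pow_mul, Nat.mul_comm]
  have hint : MemIntClosure (I ^ n) x := by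
    refine ⟨k, fun i => if i = 0 then -(x ^ k) else 0, hkpos, ?_, ?_⟩
    · intro i hi
      by_cases h0 : i = 0
      · subst h0
        simp only [if_pos rfl, Nat.sub_zero]
        exact neg_mem (hpowle hxk)
      · simp [h0]
    · rw [Finset.sum_eq_single 0 (fun b _ hb => by simp [hb])
        (fun h0 => absurd (Finset.mem_range.mpr hkpos) h0)]
      simp
  have hxt : x ∈ (maximalIdeal R) ^ t := by
    have hx1 := h n x hint
    exact Ideal.pow_le_pow_right hmn (Ideal.pow_right_mono hIm (m n) hx1)
  have hvalt : f.val t = Submodule.Quotient.mk x := by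
    rw [← AdicCompletion.transitionMap_comp_eval_apply (I := maximalIdeal R) (M := R) htN f]
    have hvN : f.val N = Submodule.mkQ (maximalIdeal R ^ N • ⊤ : Submodule R R) x := by
      rw [hx, AdicCompletion.eval_apply]
    rw [hvN]
    rfl
  rw [hvalt, Pi.zero_apply, Submodule.Quotient.mk_eq_zero]
  have hst : ((maximalIdeal R) ^ t • ⊤ : Submodule R R) = (maximalIdeal R) ^ t := by
    ext y; simp
  rw [hst]
  exact hxt
end

section
/- Let R be a Noetherian ring and M ⊆ F with F finitely generated free. For each n ≥ 1, let I(Sₙ(M)) be the ideal of maximal minors of a presentation matrix of the image Sₙ(M) of the n-th symmetric power of M inside Sₙ(F). Then \overline{I(Sₙ(M))}·Sₙ(F) ⊆ Vₙ, where V is the integral closure of the Rees algebra S(M) inside S(F) and Vₙ is its degree-n component. -/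
set_option maxHeartbeats 1000000
set_option synthInstance.maxHeartbeats 400000
open MvPolynomial IsLocalRing

noncomputable def minorsIdeal {R F : Type} [CommRing R] [AddCommGroup F] [Module R F]
    {κ : Type} [Fintype κ] [DecidableEq κ] (b : Module.Basis κ R F) (N : Submodule R F) : Ideal R :=
  Ideal.span {x | ∃ v : κ → F, (∀ j, v j ∈ N) ∧
    x = Matrix.det (Matrix.of fun i j => b.repr (v j) i)}

/-- Determinant trick: a maximal minor multiplies any element of `F` into `N`. -/
lemma det_smul_mem {R F : Type} [CommRing R] [AddCommGroup F] [Module R F]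
    {κ : Type} [Fintype κ] [DecidableEq κ] (b : Module.Basis κ R F) (N : Submodule R F)
    (v : κ → F) (hv : ∀ j, v j ∈ N) (q : F) :
    (Matrix.det (Matrix.of fun i j => b.repr (v j) i)) • q ∈ N := by
  set A : Matrix κ κ R := Matrix.of fun i j => b.repr (v j) i with hA
  have key : A.det • q = ∑ j, (Matrix.cramer A (b.repr q)) j • v j := by
    apply b.repr.injective
    ext i
    have h := congrFun (Matrix.mulVec_cramer A (b.repr q)) i
    simp only [Matrix.mulVec, dotProduct, Pi.smul_apply, smul_eq_mul] at h
    simp only [map_sum, map_smul, Finsupp.coe_finset_sum, Finset.sum_apply,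
      Finsupp.coe_smul, Pi.smul_apply, smul_eq_mul]
    rw [← h]
    refine Finset.sum_congr rfl fun j _ => ?_
    have : (b.repr (v j)) i = A i j := rfl
    rw [this, mul_comm]
  rw [key]
  exact Submodule.sum_smul_mem N _ fun j _ => hv j

/-- Any element of the minors ideal multiplies `F` into `N`. -/
lemma minors_smul_mem {R F : Type} [CommRing R] [AddCommGroup F] [Module R F]
    {κ : Type} [Fintype κ] [DecidableEq κ] (b : Module.Basis κ R F) (N : Submodule R F)
    {d : R} (hd : d ∈ minorsIdeal b N) (q : F) : d • q ∈ N := by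
  induction hd using Submodule.span_induction with
  | mem y hy =>
    obtain ⟨v, hv, rfl⟩ := hy
    exact det_smul_mem b N v hv q
  | zero => simpa using N.zero_mem
  | add y z _ _ hy hz => rw [add_smul]; exact N.add_mem hy hz
  | smul a y _ hy => rw [smul_eq_mul, mul_smul]; exact N.smul_mem a hy

/-- Minors of `Sₙ(M)` multiply homogeneous degree-`n` polynomials into the Rees algebra. -/
lemma minors_mul_mem_rees {R : Type} [CommRing R] {r : ℕ} (M : Submodule R (Fin r → R)) (n : ℕ)
    {κ : Type} [Fintype κ] [DecidableEq κ]
    (b : Module.Basis κ R (homogeneousSubmodule (Fin r) R n))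
    {d : R} (hd : d ∈ minorsIdeal b
      (Submodule.comap (homogeneousSubmodule (Fin r) R n).subtype (SnM M n)))
    {q : MvPolynomial (Fin r) R} (hq : q ∈ homogeneousSubmodule (Fin r) R n) :
    C d * q ∈ ReesAlg M := by
  have h := minors_smul_mem b _ hd (⟨q, hq⟩ : homogeneousSubmodule (Fin r) R n)
  rw [Submodule.mem_comap] at h
  have h2 : d • q ∈ SnM M n := h
  rw [smul_eq_C_mul] at h2
  exact h2.1

/-- Powers: `a ∈ I^(m+1)` implies `C a * q^(m+1) ∈ ReesAlg M`. -/
lemma pow_minors_mul_mem_rees {R : Type} [CommRing R] {r : ℕ} (M : Submodule R (Fin r → R))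
    (n : ℕ) {κ : Type} [Fintype κ] [DecidableEq κ]
    (b : Module.Basis κ R (homogeneousSubmodule (Fin r) R n))
    {q : MvPolynomial (Fin r) R} (hq : q ∈ homogeneousSubmodule (Fin r) R n) :
    ∀ m : ℕ, ∀ a ∈ (minorsIdeal b
      (Submodule.comap (homogeneousSubmodule (Fin r) R n).subtype (SnM M n))) ^ (m + 1),
      C a * q ^ (m + 1) ∈ ReesAlg M := by
  intro m
  induction m with
  | zero => intro a ha; simpa using minors_mul_mem_rees M n b (by simpa using ha) hq
  | succ m ih =>
    intro a ha
    rw [pow_succ] at ha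
    refine Submodule.mul_induction_on ha (fun y hy z hz => ?_) (fun y z hy hz => ?_)
    · have h1 := ih y hy
      have h2 := minors_mul_mem_rees M n b hz hq
      have : C (y * z) * q ^ (m + 1 + 1) = (C y * q ^ (m + 1)) * (C z * q) := by
        rw [map_mul]; ring
      rw [this]
      exact mul_mem h1 h2
    · rw [map_add, add_mul]; exact add_mem hy hz

/-- For `M ⊆ F = Rʳ` over a Noetherian ring and `n ≥ 1`, with `I(Sₙ(M))` the ideal of
maximal minors of a presentation of `Sₙ(M) ⊆ Sₙ(F)` (w.r.t. any basis of `Sₙ(F)`), one has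
`\overline{I(Sₙ(M))}·Sₙ(F) ⊆ Vₙ`, where `V` is the integral closure of `S(M)` in `S(F)`
and `Vₙ` is its degree-`n` component. -/
theorem intClosure_minors_mul_mem_V {R : Type} [CommRing R] [IsNoetherianRing R] {r : ℕ}
    (M : Submodule R (Fin r → R)) (n : ℕ) (hn : 1 ≤ n)
    {κ : Type} [Fintype κ] [DecidableEq κ]
    (b : Module.Basis κ R (homogeneousSubmodule (Fin r) R n))
    (x : R)
    (hx : MemIntClosure
      (minorsIdeal b (Submodule.comap (homogeneousSubmodule (Fin r) R n).subtype (SnM M n))) x)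
    (p : MvPolynomial (Fin r) R) (hp : p ∈ homogeneousSubmodule (Fin r) R n) :
    C x * p ∈ integralClosure (ReesAlg M) (MvPolynomial (Fin r) R) ∧
      C x * p ∈ homogeneousSubmodule (Fin r) R n := by
  obtain ⟨p₀, a, hp₀, ha, heq⟩ := hx
  have hcoeff : ∀ i ∈ Finset.range p₀, C (a i) * p ^ (p₀ - i) ∈ ReesAlg M := by
    intro i hi
    rw [Finset.mem_range] at hi
    have h1 : 1 ≤ p₀ - i := by omega
    have : p₀ - i = (p₀ - i - 1) + 1 := by omega
    rw [this]
    exact pow_minors_mul_mem_rees M n b hp _ _ (by rw [← this]; exact ha i hi)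
  constructor
  · -- integrality
    refine ⟨Polynomial.X ^ p₀ + ∑ i ∈ (Finset.range p₀).attach,
      Polynomial.C (⟨C (a i) * p ^ (p₀ - (i : ℕ)), hcoeff i i.2⟩ :
        ReesAlg M) * Polynomial.X ^ (i : ℕ), ?_, ?_⟩
    · -- monic
      apply Polynomial.monic_X_pow_add
      refine lt_of_le_of_lt (Polynomial.degree_sum_le _ _) ?_
      rw [Finset.sup_lt_iff (by exact_mod_cast WithBot.bot_lt_coe p₀)]
      intro i _
      have hi : (i : ℕ) < p₀ := Finset.mem_range.mp i.2
      calc (Polynomial.C _ * Polynomial.X ^ (i : ℕ)).degree ≤ ((i : ℕ) : WithBot ℕ) :=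
            Polynomial.degree_C_mul_X_pow_le (i : ℕ) _
        _ < (p₀ : WithBot ℕ) := by exact_mod_cast hi
    · -- evaluation is zero
      simp only [map_add, map_pow, map_sum, map_mul, Polynomial.aeval_X, Polynomial.aeval_C, Polynomial.aeval_def, Polynomial.eval₂_add, Polynomial.eval₂_pow, Polynomial.eval₂_X, Polynomial.eval₂_finset_sum, Polynomial.eval₂_mul, Polynomial.eval₂_C]
      have hterm : ∀ i ∈ (Finset.range p₀).attach,
          (algebraMap (ReesAlg M) (MvPolynomial (Fin r) R)
            ⟨C (a i) * p ^ (p₀ - (i : ℕ)), hcoeff i i.2⟩) * (C x * p) ^ (i : ℕ)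
          = C (a (i : ℕ) * x ^ (i : ℕ)) * p ^ p₀ := by
        intro i _
        have hi : (i : ℕ) < p₀ := Finset.mem_range.mp i.2
        have h0 : (algebraMap (ReesAlg M) (MvPolynomial (Fin r) R)
            ⟨C (a i) * p ^ (p₀ - (i : ℕ)), hcoeff i i.2⟩)
            = C (a i) * p ^ (p₀ - (i : ℕ)) := rfl
        rw [h0, mul_pow, ← map_pow, map_mul]
        have hpp : p ^ (p₀ - (i : ℕ)) * p ^ (i : ℕ) = p ^ p₀ := by
          rw [← pow_add, Nat.sub_add_cancel (le_of_lt hi)]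
        rw [← hpp]; ring
      rw [Finset.sum_congr rfl hterm, ← Finset.sum_mul, mul_pow, ← map_pow, ← add_mul,
        ← map_sum, ← map_add, Finset.sum_attach (Finset.range p₀) (fun i => a i * x ^ i),
        heq, map_zero, zero_mul]
  · rw [← smul_eq_C_mul]
    exact Submodule.smul_mem _ x hp
end

section
/- Let (R, 𝔪, k) be a Noetherian local ring, F a finitely generated free R-module, and M ⊆ F a submodule such that F/M is nonzero of finite length. Then there exists a basis {T₁,…,T_r} of F and generators {L₁,…,L_d} of a submodule M' with M ⊆ M' ⊆ F and F/M' ≅ k, such that the coefficient of T₁ in each L_j lies in 𝔪. In particular, there is a surjective R-linear map f₁ : F → R with f₁(M) ⊆ 𝔪. -/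
open IsLocalRing

/-- Let `(R, 𝔪, k)` be Noetherian local, `F = Rʳ` free, `M ⊆ F` with `F/M` nonzero of
finite length. Then there are a submodule `M'` with `M ⊆ M' ⊆ F` and `F/M' ≅ k`, a basis
`T` of `F` and generators `L₁,…,L_d` of `M'` such that the coefficient of `T₁` in each
`L_j` lies in `𝔪`; in particular the first coordinate functional `f₁ = T.coord 1` is a
surjective linear map `F → R` with `f₁(M) ⊆ 𝔪`. -/
theorem exists_basis_first_coeff_mem_maximalIdeal {R : Type} [CommRing R]
    [IsNoetherianRing R] [IsLocalRing R] {r : ℕ} (hr : 0 < r)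
    (M : Submodule R (Fin r → R))
    (hlen : IsFiniteLength R ((Fin r → R) ⧸ M)) (hne : M ≠ ⊤) :
    ∃ (M' : Submodule R (Fin r → R)) (T : Module.Basis (Fin r) R (Fin r → R)) (d : ℕ)
      (L : Fin d → (Fin r → R)),
      M ≤ M' ∧ Submodule.span R (Set.range L) = M' ∧
      Nonempty (((Fin r → R) ⧸ M') ≃ₗ[R] R ⧸ maximalIdeal R) ∧
      (∀ j, T.repr (L j) ⟨0, hr⟩ ∈ maximalIdeal R) ∧
      Function.Surjective (T.coord ⟨0, hr⟩) ∧
      ∀ y ∈ M, T.coord ⟨0, hr⟩ y ∈ maximalIdeal R := by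
  classical
  set F := Fin r → R
  -- the lattice of submodules of F is coatomic
  have hcoat : IsCoatomic (Submodule R F) := by
    apply CompleteLattice.coatomic_of_top_compact
    rw [← Submodule.fg_iff_compact]
    exact Module.Finite.fg_top
  obtain (h | ⟨M', hM'coatom, hMM'⟩) := hcoat.eq_top_or_exists_le_coatom M
  · exact absurd h hne
  -- F ⧸ M' is simple, hence ≃ R ⧸ 𝔪
  have hsimple : IsSimpleModule R (F ⧸ M') :=
    isSimpleModule_iff_isCoatom.mpr hM'coatom
  obtain ⟨I, hImax, ⟨eqv⟩⟩ := isSimpleModule_iff_quot_maximal.mp hsimple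
  have hI : I = maximalIdeal R := IsLocalRing.eq_maximalIdeal hImax
  subst hI
  -- the surjection π : F → R⧸𝔪 with kernel M'
  set π : F →ₗ[R] R ⧸ maximalIdeal R := eqv.toLinearMap ∘ₗ M'.mkQ with hπ
  have hπsurj : Function.Surjective π := by
    exact eqv.surjective.comp (Submodule.mkQ_surjective M')
  have hkerπ : LinearMap.ker π = M' := by
    rw [hπ, LinearMap.ker_comp, LinearMap.ker_eq_bot.mpr eqv.injective,
      Submodule.comap_bot, Submodule.ker_mkQ]
  -- pick a basis vector with nonzero image under π
  set q : R →+* R ⧸ maximalIdeal R := Ideal.Quotient.mk (maximalIdeal R) with hq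
  have hexi : ∃ i : Fin r, π (Pi.single i 1) ≠ 0 := by
    by_contra h
    push_neg at h
    have hπ0 : π = 0 := by
      apply (Pi.basisFun R (Fin r)).ext
      intro i
      simpa using h i
    obtain ⟨x, hx⟩ := hπsurj 1
    rw [hπ0] at hx
    simp only [LinearMap.zero_apply] at hx
    exact one_ne_zero hx.symm
  obtain ⟨i, hi⟩ := hexi
  -- π (single i 1) = mk a with a a unit
  obtain ⟨a, ha⟩ := Ideal.Quotient.mk_surjective (π (Pi.single i 1))
  have haunit : IsUnit a := by
    by_contra hau
    have : a ∈ maximalIdeal R := hau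
    rw [← ha, Ideal.Quotient.eq_zero_iff_mem.mpr this] at hi
    exact hi rfl
  obtain ⟨b, hb⟩ : ∃ b, a * b = 1 := by
    obtain ⟨u, hu⟩ := haunit
    exact ⟨↑u⁻¹, by rw [← hu]; simp⟩
  -- coefficients c k lifting π(single k 1) * mk b, with c i = 0
  have hc : ∀ k : Fin r, ∃ ck : R, q ck = π (Pi.single k 1) * q b :=
    fun k => Ideal.Quotient.mk_surjective _
  choose c0 hc0 using hc
  set c : Fin r → R := fun k => if k = i then 0 else c0 k with hcdef
  set s : F := Pi.single i 1 with hs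
  -- the linear functional φ x = ∑ c k * x k
  set φ : F →ₗ[R] R := ∑ k, c k • LinearMap.proj k with hφdef
  have hφ : ∀ x : F, φ x = ∑ k, c k * x k := by
    intro x
    rw [hφdef]
    simp only [LinearMap.sum_apply, LinearMap.smul_apply, smul_eq_mul]
    exact Finset.sum_congr rfl fun k _ => rfl
  have hφs : φ s = 0 := by
    rw [hφ, hs]
    apply Finset.sum_eq_zero
    intro k _
    rcases eq_or_ne k i with h | h
    · subst h; simp [hcdef]
    · simp [Pi.single_apply, h]
  -- the change of basis
  have hAB : ∀ x : F, (x + φ x • s) - φ (x + φ x • s) • s = x := by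
    intro x
    rw [map_add, map_smul, hφs, smul_eq_mul, mul_zero, add_zero, add_sub_cancel_right]
  have hBA : ∀ x : F, (x - φ x • s) + φ (x - φ x • s) • s = x := by
    intro x
    rw [map_sub, map_smul, hφs, smul_eq_mul, mul_zero, sub_zero, sub_add_cancel]
  set A : F ≃ₗ[R] F := LinearEquiv.ofLinear
    (LinearMap.id - φ.smulRight s) (LinearMap.id + φ.smulRight s)
    (LinearMap.ext fun x => by
      simpa only [LinearMap.comp_apply, LinearMap.sub_apply, LinearMap.add_apply,
        LinearMap.id_apply, LinearMap.smulRight_apply] using hAB x)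
    (LinearMap.ext fun x => by
      simpa only [LinearMap.comp_apply, LinearMap.sub_apply, LinearMap.add_apply,
        LinearMap.id_apply, LinearMap.smulRight_apply] using hBA x) with hA
  have hAsymm : ∀ x : F, A.symm x = x + φ x • s := fun x => rfl
  set T : Module.Basis (Fin r) R F :=
    ((Pi.basisFun R (Fin r)).map A).reindex (Equiv.swap ⟨0, hr⟩ i) with hT
  have hTrepr : ∀ x : F, T.repr x ⟨0, hr⟩ = x i + φ x := by
    intro x
    rw [hT, Module.Basis.repr_reindex_apply, Equiv.symm_swap, Equiv.swap_apply_left,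
      Module.Basis.map_repr]
    simp [hAsymm, hs, Pi.single_apply]
  -- key: elements of M' have first T-coordinate in 𝔪
  have key : ∀ x ∈ M', x i + φ x ∈ maximalIdeal R := by
    intro x hx
    have hπx : π x = 0 := by rw [← hkerπ] at hx; exact hx
    -- π x = ∑ k, q (x k) * π (single k 1)
    have hπsum : ∑ k, q (x k) * π (Pi.single k 1) = 0 := by
      rw [← hπx]
      have : x = ∑ k, x k • (Pi.single k 1 : F) := by
        funext j
        simp [Pi.single_apply, Finset.sum_ite_eq']
      conv_rhs => rw [this]
      rw [map_sum]
      congr 1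
      funext k
      rw [map_smul, Algebra.smul_def, Ideal.Quotient.algebraMap_eq]
    rw [← Ideal.Quotient.eq_zero_iff_mem]
    have : q (x i + φ x) = q (x i) + ∑ k, q (c k) * q (x k) := by
      rw [map_add, hφ, map_sum]
      simp [map_mul]
    rw [this]
    have hqck : ∀ k, q (c k) * q (x k)
        = (if k = i then 0 else q (x k) * π (Pi.single k 1) * q b) := by
      intro k
      rw [hcdef]
      by_cases hk : k = i
      · simp [hk]
      · simp only [hk, if_false]
        rw [hc0 k]
        ring
    rw [Finset.sum_congr rfl (fun k _ => hqck k)]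
    have hsum2 : (∑ k, if k = i then 0 else q (x k) * π (Pi.single k 1) * q b)
        = (∑ k, q (x k) * π (Pi.single k 1) * q b)
          - q (x i) * π (Pi.single i 1) * q b := by
      rw [eq_sub_iff_add_eq,
        ← Finset.sum_erase_add Finset.univ
          (fun k => q (x k) * π (Pi.single k 1) * q b) (Finset.mem_univ i),
        ← Finset.sum_erase_add Finset.univ
          (fun k => if k = i then 0 else q (x k) * π (Pi.single k 1) * q b)
          (Finset.mem_univ i)]
      simp only [eq_self_iff_true, if_true, add_zero]
      congr 1
      refine Finset.sum_congr rfl fun k hk => ?_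
      rw [if_neg (Finset.ne_of_mem_erase hk)]
    rw [hsum2, ← Finset.sum_mul, hπsum, zero_mul, zero_sub, ← hs, ← ha, ← hq,
      mul_assoc, ← map_mul, hb, map_one, mul_one]
    exact add_neg_cancel _
  -- generators of M'
  obtain ⟨d, L, hL⟩ := Submodule.fg_iff_exists_fin_generating_family.mp
    (IsNoetherian.noetherian M')
  refine ⟨M', T, d, L, hMM', hL, ⟨eqv⟩, ?_, ?_, ?_⟩
  · intro j
    have hLj : L j ∈ M' := by rw [← hL]; exact Submodule.subset_span ⟨j, rfl⟩
    rw [hTrepr]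
    exact key _ hLj
  · intro aa
    refine ⟨aa • T ⟨0, hr⟩, ?_⟩
    simp [Module.Basis.coord_apply, map_smul, Module.Basis.repr_self]
  · intro y hy
    rw [Module.Basis.coord_apply, hTrepr]
    exact key y (hMM' hy)
end

section
/- Let (R, 𝔪) be a Noetherian local ring. Suppose there exist a nonzero R-module Q of finite length and a finitely generated free R-module F mapping onto Q with kernel M, such that the integral closure of the Rees algebra S(M) in S(F) is a finitely generated S(M)-module. Then R is analytically unramified, i.e., the 𝔪-adic completion of R is reduced. -/
set_option maxHeartbeats 1000000
set_option synthInstance.maxHeartbeats 400000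
open MvPolynomial IsLocalRing

variable {R : Type} [CommRing R] {r : ℕ}

theorem linForm_single (i : Fin r) (c : R) : linForm (Pi.single i c) = C c * X i := by
  rw [linForm]
  rw [Finset.sum_eq_single i]
  · simp
  · intro j _ hj
    rw [Pi.single_eq_of_ne hj]; simp
  · simp

theorem linForm_mem {M : Submodule R (Fin r → R)} {v : Fin r → R} (hv : v ∈ M) :
    linForm v ∈ ReesAlg M :=
  Algebra.subset_adjoin ⟨v, hv, rfl⟩

/-- L3 -/
theorem C_mul_X_pow_mem {M : Submodule R (Fin r → R)} {J : Ideal R} (i₀ : Fin r)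
    (hJM : ∀ c ∈ J, Pi.single i₀ c ∈ M) :
    ∀ (q : ℕ) (c : R), c ∈ J ^ q → C c * (X i₀ : MvPolynomial (Fin r) R) ^ q ∈ ReesAlg M := by
  intro q
  induction q with
  | zero => intro c _; simpa using (ReesAlg M).algebraMap_mem c
  | succ q ih =>
    intro c hc
    rw [pow_succ'] at hc
    refine Submodule.mul_induction_on (C := fun c =>
        C c * (X i₀ : MvPolynomial (Fin r) R) ^ (q + 1) ∈ ReesAlg M) hc
      (fun d hd e he => ?_) (fun x y hx hy => ?_)
    · show C (d * e) * (X i₀ : MvPolynomial (Fin r) R) ^ (q + 1) ∈ ReesAlg M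
      have h1 : (C (d * e) : MvPolynomial (Fin r) R) * X i₀ ^ (q + 1)
          = (C d * X i₀) * (C e * X i₀ ^ q) := by rw [map_mul]; ring
      rw [h1]
      exact mul_mem (by rw [← linForm_single]; exact linForm_mem (hJM d hd)) (ih e he)
    · show C (x + y) * (X i₀ : MvPolynomial (Fin r) R) ^ (q + 1) ∈ ReesAlg M
      rw [map_add, add_mul]
      exact add_mem hx hy

/-- The algebra map `S(F) → R[T]` induced by a functional `lam`. -/
noncomputable def Phi (lam : (Fin r → R) →ₗ[R] R) :
    MvPolynomial (Fin r) R →ₐ[R] Polynomial R :=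
  aeval (fun i => Polynomial.C (lam (Pi.single i 1)) * Polynomial.X)

theorem lam_eq_sum (lam : (Fin r → R) →ₗ[R] R) (v : Fin r → R) :
    lam v = ∑ i, v i * lam (Pi.single i 1) := by
  conv_lhs => rw [pi_eq_sum_univ v]
  rw [map_sum]
  simp only [map_smul, smul_eq_mul]
  refine Finset.sum_congr rfl fun i _ => ?_
  have h : (fun j => if i = j then (1:R) else 0) = Pi.single i 1 := by
    funext j; simp [Pi.single_apply, eq_comm]
  rw [h]

theorem Phi_linForm (lam : (Fin r → R) →ₗ[R] R) (v : Fin r → R) :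
    Phi lam (linForm v) = Polynomial.C (lam v) * Polynomial.X := by
  rw [linForm, map_sum, lam_eq_sum lam v, map_sum, Finset.sum_mul]
  refine Finset.sum_congr rfl fun i _ => ?_
  rw [map_mul, Phi, aeval_C, aeval_X, map_mul]
  simp only [Polynomial.algebraMap_eq]
  ring

/-- L5: coefficient bound on the Rees algebra. -/
theorem coeff_Phi_mem {M : Submodule R (Fin r → R)} (lam : (Fin r → R) →ₗ[R] R)
    {p : MvPolynomial (Fin r) R} (hp : p ∈ ReesAlg M) (j : ℕ) :
    (Phi lam p).coeff j ∈ (M.map lam : Ideal R) ^ j := by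
  induction hp using Algebra.adjoin_induction generalizing j with
  | mem x hx =>
    obtain ⟨v, hv, rfl⟩ := hx
    rw [Phi_linForm]
    rcases eq_or_ne j 1 with rfl | hj
    · simpa [pow_one] using (⟨v, hv, rfl⟩ : ∃ y ∈ M, lam y = lam v)
    · rcases Nat.eq_zero_or_pos j with rfl | hj0
      · simp
      · have : (Polynomial.C (lam v) * Polynomial.X).coeff j = 0 := by
          rw [Polynomial.coeff_C_mul, Polynomial.coeff_X, if_neg (Ne.symm hj), mul_zero]
        rw [this]; exact zero_mem _
  | algebraMap c =>
    rcases Nat.eq_zero_or_pos j with rfl | hj0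
    · simp
    · have : Phi lam (algebraMap R (MvPolynomial (Fin r) R) c) = Polynomial.C c := by
        simp [Phi]
      rw [this, Polynomial.coeff_C, if_neg (Nat.pos_iff_ne_zero.mp hj0)]
      exact zero_mem _
  | add x y hx hy ihx ihy =>
    rw [map_add, Polynomial.coeff_add]
    exact add_mem (ihx j) (ihy j)
  | mul x y hx hy ihx ihy =>
    rw [map_mul, Polynomial.coeff_mul]
    refine sum_mem fun c hc => ?_
    rw [Finset.HasAntidiagonal.mem_antidiagonal] at hc
    have h1 : (Phi lam x).coeff c.1 * (Phi lam y).coeff c.2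
        ∈ (M.map lam : Ideal R) ^ c.1 * (M.map lam : Ideal R) ^ c.2 :=
      Ideal.mul_mem_mul (ihx c.1) (ihy c.2)
    rwa [← pow_add, hc] at h1

/-- L6: coefficient bound on the integral closure of the Rees algebra. -/
theorem exists_coeff_bound {M : Submodule R (Fin r → R)} (lam : (Fin r → R) →ₗ[R] R)
    (hfin : Module.Finite (ReesAlg M) (integralClosure (ReesAlg M) (MvPolynomial (Fin r) R))) :
    ∃ D : ℕ, ∀ w ∈ integralClosure (ReesAlg M) (MvPolynomial (Fin r) R), ∀ j : ℕ,
      (Phi lam w).coeff j ∈ (M.map lam : Ideal R) ^ (j - D) := by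
  obtain ⟨s, hs⟩ := hfin.fg_top
  refine ⟨s.sup (fun w => (Phi lam (w : MvPolynomial (Fin r) R)).natDegree), fun w hw j => ?_⟩
  set D := s.sup (fun w => (Phi lam (w : MvPolynomial (Fin r) R)).natDegree) with hD
  have hmem : (⟨w, hw⟩ : integralClosure (ReesAlg M) (MvPolynomial (Fin r) R))
      ∈ Submodule.span (ReesAlg M) (s : Set (integralClosure (ReesAlg M) (MvPolynomial (Fin r) R))) := by
    rw [hs]; exact Submodule.mem_top
  have key : ∀ x : integralClosure (ReesAlg M) (MvPolynomial (Fin r) R),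
      x ∈ Submodule.span (ReesAlg M) (s : Set (integralClosure (ReesAlg M) (MvPolynomial (Fin r) R))) →
      ∀ j : ℕ, (Phi lam (x : MvPolynomial (Fin r) R)).coeff j ∈ (M.map lam : Ideal R) ^ (j - D) := by
    intro x hx
    induction hx using Submodule.span_induction with
    | mem x hxs =>
      have hle : (Phi lam (x : MvPolynomial (Fin r) R)).natDegree ≤ D := by
        rw [hD]
        exact Finset.le_sup (f := fun w : integralClosure (ReesAlg M) (MvPolynomial (Fin r) R) => (Phi lam (w : MvPolynomial (Fin r) R)).natDegree) (Finset.mem_coe.mp hxs)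
      intro j
      rcases le_or_gt j D with h | h
      · rw [Nat.sub_eq_zero_of_le h, pow_zero, Ideal.one_eq_top]; exact Submodule.mem_top
      · rw [Polynomial.coeff_eq_zero_of_natDegree_lt (lt_of_le_of_lt hle h)]
        exact zero_mem _
    | zero => intro j; simp only [ZeroMemClass.coe_zero, map_zero, Polynomial.coeff_zero]; exact zero_mem _
    | add x y hx hy ihx ihy =>
      intro j
      have : ((x + y : integralClosure (ReesAlg M) (MvPolynomial (Fin r) R)) : MvPolynomial (Fin r) R)
          = (x : MvPolynomial (Fin r) R) + y := rfl
      rw [this, map_add, Polynomial.coeff_add]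
      exact add_mem (ihx j) (ihy j)
    | smul a x hx ih =>
      intro j
      have hcoe : ((a • x : integralClosure (ReesAlg M) (MvPolynomial (Fin r) R)) : MvPolynomial (Fin r) R)
          = (a : MvPolynomial (Fin r) R) * x := rfl
      rw [hcoe, map_mul, Polynomial.coeff_mul]
      refine sum_mem fun c hc => ?_
      rw [Finset.HasAntidiagonal.mem_antidiagonal] at hc
      have h1 : (Phi lam (a : MvPolynomial (Fin r) R)).coeff c.1 * (Phi lam (x : MvPolynomial (Fin r) R)).coeff c.2
          ∈ (M.map lam : Ideal R) ^ c.1 * (M.map lam : Ideal R) ^ (c.2 - D) :=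
        Ideal.mul_mem_mul (coeff_Phi_mem lam a.2 c.1) (ih c.2)
      rw [← pow_add] at h1
      exact Ideal.pow_le_pow_right (by omega) h1
  exact key _ hmem j

/-- L7: the key estimate. -/
theorem key_estimate {M : Submodule R (Fin r → R)} (lam : (Fin r → R) →ₗ[R] R)
    {J : Ideal R} {i₀ : Fin r} (hJM : ∀ c ∈ J, Pi.single i₀ c ∈ M)
    (hu : IsUnit (lam (Pi.single i₀ 1))) {D : ℕ}
    (hbound : ∀ w ∈ integralClosure (ReesAlg M) (MvPolynomial (Fin r) R), ∀ j : ℕ,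
      (Phi lam w).coeff j ∈ (M.map lam : Ideal R) ^ (j - D))
    (x : R) (s m : ℕ) (hm : m ≠ 0) (hx : x ^ m ∈ J ^ (s * m)) :
    x ∈ (M.map lam : Ideal R) ^ (s - D) := by
  set w : MvPolynomial (Fin r) R := C x * X i₀ ^ s with hw
  have hwm : w ^ m ∈ ReesAlg M := by
    have h1 : w ^ m = C (x ^ m) * X i₀ ^ (s * m) := by
      rw [hw, mul_pow, ← pow_mul, map_pow]
    rw [h1]
    exact C_mul_X_pow_mem i₀ hJM (s * m) _ hx
  have hint : w ∈ integralClosure (ReesAlg M) (MvPolynomial (Fin r) R) := by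
    refine ⟨Polynomial.X ^ m - Polynomial.C (⟨w ^ m, hwm⟩ : ReesAlg M),
      Polynomial.monic_X_pow_sub_C _ hm, ?_⟩
    simp only [Polynomial.eval₂_sub, Polynomial.eval₂_pow, Polynomial.eval₂_X,
      Polynomial.eval₂_C]
    exact sub_eq_zero_of_eq rfl
  have hcoeff := hbound w hint s
  have hPhi : (Phi lam w).coeff s = x * (lam (Pi.single i₀ 1)) ^ s := by
    rw [hw, map_mul, map_pow]
    have h2 : Phi lam (C x) = Polynomial.C x := by simp [Phi]
    have h3 : Phi lam (X i₀) = Polynomial.C (lam (Pi.single i₀ 1)) * Polynomial.X := by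
      simp [Phi]
    rw [h2, h3, mul_pow, ← Polynomial.C_pow, ← mul_assoc, ← map_mul,
      Polynomial.coeff_C_mul, Polynomial.coeff_X_pow, if_pos rfl, mul_one]
  rw [hPhi] at hcoeff
  obtain ⟨v, hv⟩ := (hu.pow s).exists_right_inv
  have h4 := Ideal.mul_mem_right v _ hcoeff
  rwa [mul_assoc, hv, mul_one] at h4

/-- Existence of a functional `lam` with `lam M ⊆ 𝔪` and `lam` of some basis vector a unit. -/
theorem exists_lam [IsLocalRing R] (M : Submodule R (Fin r → R))
    (hne : M ⊔ (IsLocalRing.maximalIdeal R) • (⊤ : Submodule R (Fin r → R)) ≠ ⊤) :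
    ∃ (lam : (Fin r → R) →ₗ[R] R) (i₀ : Fin r),
      (∀ v ∈ M, lam v ∈ maximalIdeal R) ∧ IsUnit (lam (Pi.single i₀ 1)) := by
  classical
  set k := ResidueField R
  set π : (Fin r → R) →ₗ[R] (Fin r → k) :=
    LinearMap.pi (fun i => (Algebra.linearMap R k).comp (LinearMap.proj i)) with hπ
  have hπ_apply : ∀ (v : Fin r → R) (i : Fin r), π v i = residue R (v i) := fun v i => rfl
  have hkerπ : ∀ v : Fin r → R, π v = 0 →
      v ∈ (IsLocalRing.maximalIdeal R) • (⊤ : Submodule R (Fin r → R)) := by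
    intro v hv
    have hvi : ∀ i, v i ∈ maximalIdeal R := by
      intro i
      have := congrFun hv i
      rw [hπ_apply] at this
      exact Ideal.Quotient.eq_zero_iff_mem.mp this
    rw [pi_eq_sum_univ v]
    exact sum_mem fun i _ => Submodule.smul_mem_smul (hvi i) Submodule.mem_top
  -- the image of M in k^r is a k-subspace
  have hsmul : ∀ (c : k) (y : Fin r → k), y ∈ π '' (M : Set (Fin r → R)) →
      c • y ∈ π '' (M : Set (Fin r → R)) := by
    rintro c _ ⟨v, hv, rfl⟩
    obtain ⟨a, rfl⟩ := residue_surjective (R := R) c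
    refine ⟨a • v, M.smul_mem a hv, ?_⟩
    rw [map_smul]
    funext i
    rw [Pi.smul_apply, Pi.smul_apply, hπ_apply]
    rw [Algebra.smul_def]
    rfl
  set p : Submodule k (Fin r → k) :=
    { carrier := π '' (M : Set (Fin r → R))
      add_mem' := by
        rintro _ _ ⟨v, hv, rfl⟩ ⟨w, hw, rfl⟩
        exact ⟨v + w, M.add_mem hv hw, map_add π v w⟩
      zero_mem' := ⟨0, M.zero_mem, map_zero π⟩
      smul_mem' := hsmul } with hp
  have hplt : p ≠ ⊤ := by
    intro htop
    apply hne
    rw [eq_top_iff]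
    intro x _
    have hx : π x ∈ p := htop ▸ Submodule.mem_top
    obtain ⟨v, hv, hvx⟩ := hx
    have hxv : x - v ∈ (IsLocalRing.maximalIdeal R) • (⊤ : Submodule R (Fin r → R)) := by
      apply hkerπ
      rw [map_sub, hvx, sub_self]
    have : x = v + (x - v) := by ring
    rw [this]
    exact Submodule.add_mem _ (Submodule.mem_sup_left hv) (Submodule.mem_sup_right hxv)
  obtain ⟨ℓ, hℓne, hℓp⟩ :=
    Submodule.exists_dual_map_eq_bot_of_lt_top (lt_top_iff_ne_top.mpr hplt) inferInstance
  -- pick i₀ with ℓ (single i₀ 1) ≠ 0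
  have hi₀ : ∃ i₀ : Fin r, ℓ (Pi.single i₀ 1) ≠ 0 := by
    by_contra h
    push_neg at h
    apply hℓne
    refine LinearMap.ext fun y => ?_
    have h1 : ∀ i : Fin r, (fun j => if i = j then (1:k) else 0) = Pi.single i 1 := fun i => by
      funext j; simp [Pi.single_apply, eq_comm]
    rw [pi_eq_sum_univ y, map_sum]
    simp only [h1, map_smul, h, smul_zero, Finset.sum_const_zero, LinearMap.zero_apply]
  obtain ⟨i₀, hi₀⟩ := hi₀
  -- lift the functional
  choose c hc using fun i => residue_surjective (R := R) (ℓ (Pi.single i 1))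
  set lam : (Fin r → R) →ₗ[R] R := ∑ i, c i • LinearMap.proj i with hlam
  have hlam_apply : ∀ v, lam v = ∑ i, c i * v i := by
    intro v
    rw [hlam]
    simp [LinearMap.sum_apply]
  have hres : ∀ v, residue R (lam v) = ℓ (π v) := by
    intro v
    rw [hlam_apply, map_sum]
    conv_rhs => rw [pi_eq_sum_univ (π v), map_sum]
    refine Finset.sum_congr rfl fun i _ => ?_
    have h1 : (fun j => if i = j then (1:k) else 0) = Pi.single i 1 := by
      funext j; simp [Pi.single_apply, eq_comm]
    rw [h1, map_smul, map_mul, hc i, hπ_apply, smul_eq_mul, mul_comm]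
  refine ⟨lam, i₀, fun v hv => ?_, ?_⟩
  · have h2 : ℓ (π v) = 0 := by
      have : ℓ (π v) ∈ p.map ℓ := Submodule.mem_map_of_mem ⟨v, hv, rfl⟩
      rw [hℓp] at this
      exact (Submodule.mem_bot k).mp this
    have h3 := hres v
    rw [h2] at h3
    exact Ideal.Quotient.eq_zero_iff_mem.mp h3
  · have h4 : π (Pi.single i₀ 1) = Pi.single i₀ (1:k) := by
      funext i
      rw [hπ_apply]
      rcases eq_or_ne i i₀ with rfl | hne'
      · simp
      · rw [Pi.single_eq_of_ne hne', Pi.single_eq_of_ne hne', map_zero]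
    by_contra hunit
    have h5 : lam (Pi.single i₀ 1) ∈ maximalIdeal R := hunit
    have h6 : residue R (lam (Pi.single i₀ 1)) = 0 := Ideal.Quotient.eq_zero_iff_mem.mpr h5
    rw [hres, h4] at h6
    exact hi₀ h6

/-- A finite length module over a local ring is killed by a power of the maximal ideal. -/
theorem exists_pow_smul_top_eq_bot [IsLocalRing R] (Q : Type*) [AddCommGroup Q] [Module R Q]
    (hQ : IsFiniteLength R Q) :
    ∃ N : ℕ, (maximalIdeal R) ^ N • (⊤ : Submodule R Q) = ⊥ := by
  obtain ⟨hNoe, hArt⟩ := isFiniteLength_iff_isNoetherian_isArtinian.mp hQ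
  set f : ℕ →o (Submodule R Q)ᵒᵈ :=
    ⟨fun n => OrderDual.toDual ((maximalIdeal R) ^ n • (⊤ : Submodule R Q)), by
      intro m n hmn
      exact Submodule.smul_mono_left (Ideal.pow_le_pow_right hmn)⟩ with hf
  obtain ⟨n, hn⟩ := IsArtinian.monotone_stabilizes f
  refine ⟨n, ?_⟩
  have hstab : (maximalIdeal R) ^ n • (⊤ : Submodule R Q)
      = (maximalIdeal R) ^ (n + 1) • (⊤ : Submodule R Q) :=
    congrArg OrderDual.ofDual (hn (n + 1) (Nat.le_succ n))
  have hle : (maximalIdeal R) ^ n • (⊤ : Submodule R Q)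
      ≤ (maximalIdeal R) • ((maximalIdeal R) ^ n • (⊤ : Submodule R Q)) := by
    rw [← Submodule.smul_assoc, smul_eq_mul, ← pow_succ']
    exact le_of_eq hstab
  exact Submodule.eq_bot_of_le_smul_of_le_jacobson_bot (maximalIdeal R) _
    (IsNoetherian.noetherian _) hle (IsLocalRing.maximalIdeal_le_jacobson ⊥)

/-- If there exist a nonzero finite length module `Q`, a finitely generated free module
`F = Rʳ` mapping onto `Q` with kernel `M`, such that the integral closure of `S(M)` in
`S(F)` is a finitely generated `S(M)`-module, then the Noetherian local ring `R` is
analytically unramified. -/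
theorem analyticallyUnramified_of_integralClosure_finite {R : Type} [CommRing R]
    [IsNoetherianRing R] [IsLocalRing R] {r : ℕ}
    (Q : Type) [AddCommGroup Q] [Module R Q] [Nontrivial Q]
    (hQ : IsFiniteLength R Q)
    (g : (Fin r → R) →ₗ[R] Q) (hg : Function.Surjective g)
    (M : Submodule R (Fin r → R)) (hM : M = LinearMap.ker g)
    (hfin : Module.Finite (ReesAlg M) (integralClosure (ReesAlg M) (MvPolynomial (Fin r) R))) :
    IsReduced (AdicCompletion (maximalIdeal R) R) := by
  classical
  obtain ⟨N, hNQ⟩ := exists_pow_smul_top_eq_bot Q hQ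
  -- 𝔪^N F ⊆ M
  have hNM : (maximalIdeal R) ^ N • (⊤ : Submodule R (Fin r → R)) ≤ M := by
    intro v hv
    have h1 : g v ∈ Submodule.map g ((maximalIdeal R) ^ N • (⊤ : Submodule R (Fin r → R))) :=
      Submodule.mem_map_of_mem hv
    rw [Submodule.map_smul'', Submodule.map_top, LinearMap.range_eq_top.mpr hg, hNQ] at h1
    rw [hM, LinearMap.mem_ker]
    simpa using h1
  -- M + 𝔪 F ≠ F
  have hQfg : (⊤ : Submodule R Q).FG := by
    have := (isFiniteLength_iff_isNoetherian_isArtinian.mp hQ).1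
    exact IsNoetherian.noetherian _
  have hne : M ⊔ (maximalIdeal R) • (⊤ : Submodule R (Fin r → R)) ≠ ⊤ := by
    intro htop
    have h2 : Submodule.map g (M ⊔ (maximalIdeal R) • (⊤ : Submodule R (Fin r → R))) = ⊤ := by
      rw [htop, Submodule.map_top, LinearMap.range_eq_top.mpr hg]
    rw [Submodule.map_sup, Submodule.map_smul'', Submodule.map_top,
      LinearMap.range_eq_top.mpr hg] at h2
    have h3 : Submodule.map g M = ⊥ := by
      rw [hM]
      exact le_bot_iff.mp (fun x ⟨v, hv, hvx⟩ => by
        simp only [Submodule.mem_bot]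
        rw [← hvx]
        exact LinearMap.mem_ker.mp hv)
    rw [h3, bot_sup_eq] at h2
    have h4 : (⊤ : Submodule R Q) = ⊥ :=
      Submodule.eq_bot_of_le_smul_of_le_jacobson_bot (maximalIdeal R) ⊤ hQfg
        (le_of_eq h2.symm) (IsLocalRing.maximalIdeal_le_jacobson ⊥)
    obtain ⟨x, hx⟩ := exists_ne (0 : Q)
    exact hx (Submodule.mem_bot R |>.mp (h4 ▸ Submodule.mem_top))
  obtain ⟨lam, i₀, hlamM, hu⟩ := exists_lam M hne
  have haI : (M.map lam : Ideal R) ≤ maximalIdeal R := by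
    rintro x ⟨v, hv, rfl⟩
    exact hlamM v hv
  obtain ⟨D, hbound⟩ := exists_coeff_bound lam hfin
  have hJM : ∀ c ∈ (maximalIdeal R) ^ N, Pi.single i₀ c ∈ M := by
    intro c hc
    have h5 : (Pi.single i₀ c : Fin r → R) = c • (Pi.single i₀ (1 : R) : Fin r → R) := by
      funext jj
      rcases eq_or_ne jj i₀ with rfl | hne'
      · simp
      · simp [Pi.single_eq_of_ne hne']
    rw [h5]
    exact hNM (Submodule.smul_mem_smul hc Submodule.mem_top)
  have key : ∀ (x : R) (n m : ℕ), m ≠ 0 → x ^ m ∈ (maximalIdeal R) ^ (N * ((n + D) * m)) →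
      x ∈ (maximalIdeal R) ^ n := by
    intro x n m hm hx
    have hx' : x ^ m ∈ ((maximalIdeal R) ^ N) ^ ((n + D) * m) := by
      rwa [← pow_mul]
    have h6 := key_estimate lam hJM hu hbound x (n + D) m hm hx'
    rw [Nat.add_sub_cancel] at h6
    exact Ideal.pow_right_mono haI n h6
  -- conclude
  constructor
  intro z hz
  obtain ⟨m, hm⟩ := hz
  rcases m with - | m
  · rw [pow_zero] at hm
    calc z = z * 1 := (mul_one z).symm
    _ = z * 0 := by rw [hm]
    _ = 0 := mul_zero z
  · obtain ⟨f, rfl⟩ := AdicCompletion.mk_surjective (maximalIdeal R) R z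
    apply AdicCompletion.mk_zero_of
    refine ⟨0, fun n _ => ?_⟩
    set j := max n (N * ((n + D) * (m + 1))) with hj
    refine ⟨j, le_max_left _ _, n, le_rfl, ?_⟩
    have hsmul_top : ∀ q : ℕ, ((maximalIdeal R) ^ q • ⊤ : Submodule R R)
        = ((maximalIdeal R) ^ q : Ideal R) := by
      intro q; ext x; simp
    rw [hsmul_top]
    -- extract the power condition
    have h7 := congrArg (AdicCompletion.evalₐ (maximalIdeal R) j) hm
    rw [map_pow, map_zero, AdicCompletion.evalₐ_mk, ← map_pow] at h7
    have h8 : (f.val j) ^ (m + 1) ∈ (maximalIdeal R) ^ j := Ideal.Quotient.eq_zero_iff_mem.mp h7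
    have h9 : (f.val j) ^ (m + 1) ∈ (maximalIdeal R) ^ (N * ((n + D) * (m + 1))) :=
      Ideal.pow_le_pow_right (le_max_right _ _) h8
    exact key _ n (m + 1) (Nat.succ_ne_zero m) h9
end

section
/- Let (R, 𝔪) be a Noetherian local ring with 𝔪-adic completion R̂, F a finitely generated free R-module, and M ⊆ F a submodule. For every n ≥ k ≥ 0, the intersection of S_{n-k}(M̂)·S_k(F̂) with Sₙ(F) inside Sₙ(F̂) equals S_{n-k}(M)·S_k(F), where M̂ = R̂ ⊗_R M ⊆ R̂ ⊗_R F = F̂. -/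
set_option maxHeartbeats 1000000
set_option synthInstance.maxHeartbeats 400000
open MvPolynomial IsLocalRing

/-- The extension `M̂ = R̂ ⊗_R M ⊆ R̂ ⊗_R F = F̂` of a submodule `M ⊆ F = Rʳ` to the
`𝔪`-adic completion `R̂` of `R` (realised, using flatness of `R̂`, as the `R̂`-span of the
image of `M` in `F̂ = R̂ʳ`). -/
noncomputable def hatModule {R : Type} [CommRing R] [IsLocalRing R] {r : ℕ}
    (M : Submodule R (Fin r → R)) :
    Submodule (AdicCompletion (maximalIdeal R) R) (Fin r → AdicCompletion (maximalIdeal R) R) :=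
  Submodule.span _ ((fun v i => algebraMap R (AdicCompletion (maximalIdeal R) R) (v i)) ''
    (M : Set (Fin r → R)))

section Aux

variable {R : Type} [CommRing R] {r : ℕ}

lemma linForm_map {S : Type} [CommRing S] (f : R →+* S) (v : Fin r → R) :
    linForm (fun i => f (v i)) = MvPolynomial.map f (linForm v) := by
  simp [linForm, map_sum]

lemma linForm_mem_homog (v : Fin r → R) :
    linForm v ∈ homogeneousSubmodule (Fin r) R 1 :=
  sum_mem fun i _ => (mem_homogeneousSubmodule _ _).mpr (isHomogeneous_C_mul_X _ _)

lemma linForm_zero : linForm (0 : Fin r → R) = 0 := by simp [linForm]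

lemma linForm_add (v w : Fin r → R) : linForm (v + w) = linForm v + linForm w := by
  simp [linForm, add_mul, Finset.sum_add_distrib]

lemma linForm_smul (c : R) (v : Fin r → R) : linForm (c • v) = c • linForm v := by
  simp [linForm, Finset.smul_sum, smul_eq_C_mul, mul_assoc]

/-- Decomposition of homogeneous polys into monomials: membership in a span of mapped
homogeneous polynomials. -/
lemma homog_le_span_map {S : Type} [CommRing S] (f : R →+* S) (k : ℕ) :
    homogeneousSubmodule (Fin r) S k ≤
      Submodule.span S (MvPolynomial.map f '' (homogeneousSubmodule (Fin r) R k : Set _)) := by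
  intro q hq
  rw [← support_sum_monomial_coeff q]
  refine sum_mem fun d hd => ?_
  have hdeg : d.degree = k := by
    have := (mem_homogeneousSubmodule _ _).mp hq (mem_support_iff.mp hd)
    rw [Finsupp.degree_eq_weight_one]; exact this
  have heq : (monomial d (coeff d q) : MvPolynomial (Fin r) S)
      = (coeff d q) • (MvPolynomial.map f (monomial d (1 : R))) := by
    simp [map_monomial, smul_monomial]
  rw [heq]
  exact Submodule.smul_mem _ _ (Submodule.subset_span
    ⟨monomial d 1, (mem_homogeneousSubmodule _ _).mpr (isHomogeneous_monomial 1 hdeg), rfl⟩)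

lemma homog_fg (n : ℕ) : (homogeneousSubmodule (Fin r) R n).FG := by
  have hset : homogeneousSubmodule (Fin r) R n =
      Submodule.span R ((fun d => (monomial d 1 : MvPolynomial (Fin r) R)) ''
        ↑(Finset.finsuppAntidiag (Finset.univ : Finset (Fin r)) n)) := by
    apply le_antisymm
    · intro q hq
      rw [← support_sum_monomial_coeff q]
      refine sum_mem fun d hd => ?_
      have hdeg : d.degree = n := by
        have := (mem_homogeneousSubmodule _ _).mp hq (mem_support_iff.mp hd)
        rw [Finsupp.degree_eq_weight_one]; exact this
      have heq : (monomial d (coeff d q) : MvPolynomial (Fin r) R)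
          = (coeff d q) • (monomial d (1 : R)) := by simp [smul_monomial]
      rw [heq]
      refine Submodule.smul_mem _ _ (Submodule.subset_span ⟨d, ?_, rfl⟩)
      simp only [Finset.coe_sort_coe, Finset.mem_coe, Finset.mem_finsuppAntidiag]
      refine ⟨?_, Finset.subset_univ _⟩
      rw [← hdeg]; unfold Finsupp.degree
      exact (Finset.sum_subset (Finset.subset_univ _)
        (fun i _ hi => Finsupp.notMem_support_iff.mp hi)).symm
    · rw [Submodule.span_le]
      rintro _ ⟨d, hd, rfl⟩
      simp only [Finset.coe_sort_coe, Finset.mem_coe, Finset.mem_finsuppAntidiag] at hd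
      refine (mem_homogeneousSubmodule _ _).mpr (isHomogeneous_monomial 1 ?_)
      unfold Finsupp.degree; rw [← hd.1]
      exact Finset.sum_subset (Finset.subset_univ _)
        (fun i _ hi => Finsupp.notMem_support_iff.mp hi)
  rw [hset]
  exact Submodule.fg_span ((Finset.finsuppAntidiag _ n : Finset _).finite_toSet.image _)

end Aux

section Aux2

variable {R : Type} [CommRing R] {r : ℕ}

lemma mvmap_smul {S : Type} [CommRing S] (f : R →+* S) (a : R) (q : MvPolynomial (Fin r) R) :
    MvPolynomial.map f (a • q) = f a • MvPolynomial.map f q := by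
  rw [smul_eq_C_mul, smul_eq_C_mul, map_mul, MvPolynomial.map_C]

variable [IsNoetherianRing R] [IsLocalRing R]

lemma span_descent (n : ℕ) (N : Submodule R (MvPolynomial (Fin r) R))
    (hNW : N ≤ homogeneousSubmodule (Fin r) R n)
    (p : MvPolynomial (Fin r) R) (hp : p ∈ homogeneousSubmodule (Fin r) R n)
    (h : MvPolynomial.map (algebraMap R (AdicCompletion (maximalIdeal R) R)) p ∈
      Submodule.span (AdicCompletion (maximalIdeal R) R)
        (MvPolynomial.map (algebraMap R (AdicCompletion (maximalIdeal R) R)) ''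
          (N : Set (MvPolynomial (Fin r) R)))) :
    p ∈ N := by
  classical
  set Rh := AdicCompletion (maximalIdeal R) R
  set φ : MvPolynomial (Fin r) R →+* MvPolynomial (Fin r) Rh :=
    MvPolynomial.map (algebraMap R Rh) with hφdef
  set W := homogeneousSubmodule (Fin r) R n with hWdef
  obtain ⟨c, hcsupp, hcsum⟩ := Submodule.mem_span_set.mp h
  have hgex : ∀ x ∈ c.support, ∃ gx, gx ∈ N ∧ φ gx = x := by
    intro x hx
    obtain ⟨gx, hgN, hgeq⟩ := hcsupp hx
    exact ⟨gx, hgN, hgeq⟩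
  choose! g hgN hgφ using hgex
  have key : ∀ t : ℕ, p ∈ N ⊔ ((maximalIdeal R) ^ t • W) := by
    intro t
    set π := Ideal.Quotient.mk ((maximalIdeal R) ^ t) with hπdef
    set ε := (AdicCompletion.evalₐ (maximalIdeal R) t).toRingHom with hεdef
    have hεalg : ε.comp (algebraMap R Rh) = π := by
      ext a
      have hc := (AdicCompletion.evalₐ (maximalIdeal R) t).commutes a
      rw [Ideal.Quotient.algebraMap_eq] at hc
      exact hc
    have hsur : ∀ x : MvPolynomial (Fin r) Rh, ∃ a : R, π a = ε (c x) :=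
      fun x => Ideal.Quotient.mk_surjective _
    choose ρ hρ using hsur
    set y := ∑ x ∈ c.support, ρ x • g x with hy
    have hyN : y ∈ N := sum_mem fun x hx => Submodule.smul_mem _ _ (hgN x hx)
    have hmap : MvPolynomial.map π (p - y) = 0 := by
      have h1 : MvPolynomial.map π p = MvPolynomial.map ε (φ p) := by
        rw [hφdef, MvPolynomial.map_map, hεalg]
      have h2 : MvPolynomial.map π y = MvPolynomial.map ε (φ p) := by
        rw [← hcsum, Finsupp.sum, hy, map_sum, map_sum]
        refine Finset.sum_congr rfl fun x hx => ?_
        rw [mvmap_smul, mvmap_smul, hρ x]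
        congr 1
        conv_rhs => rw [← hgφ x hx]
        rw [hφdef, MvPolynomial.map_map, hεalg]
      rw [map_sub, h1, h2, sub_self]
    have hcoeff : ∀ d, coeff d (p - y) ∈ (maximalIdeal R) ^ t := by
      intro d
      have hc0 := congrArg (coeff d) hmap
      rw [coeff_map, coeff_zero] at hc0
      exact Ideal.Quotient.eq_zero_iff_mem.mp hc0
    have hqW : p - y ∈ W := sub_mem hp (hNW hyN)
    have hqsm : p - y ∈ (maximalIdeal R) ^ t • W := by
      rw [← support_sum_monomial_coeff (p - y)]
      refine sum_mem fun d hd => ?_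
      have hdeg : d.degree = n := by
        have := (mem_homogeneousSubmodule _ _).mp hqW (mem_support_iff.mp hd)
        rw [Finsupp.degree_eq_weight_one]; exact this
      have heq : (monomial d (coeff d (p - y)) : MvPolynomial (Fin r) R)
          = coeff d (p - y) • monomial d (1 : R) := by simp [smul_monomial]
      rw [heq]
      exact Submodule.smul_mem_smul (hcoeff d)
        ((mem_homogeneousSubmodule _ _).mpr (isHomogeneous_monomial 1 hdeg))
    have hpy : p = y + (p - y) := by ring
    rw [hpy]
    exact add_mem (Submodule.mem_sup_left hyN) (Submodule.mem_sup_right hqsm)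
  haveI : Module.Finite R ↥W := Module.Finite.iff_fg.mpr (homog_fg n)
  set N₀ : Submodule R ↥W := N.comap W.subtype with hN₀
  have hKrull := Ideal.iInf_pow_smul_eq_bot_of_isLocalRing
    (I := maximalIdeal R) (M := ↥W ⧸ N₀) (Ideal.IsMaximal.ne_top (maximalIdeal.isMaximal R))
  set p₀ : ↥W := ⟨p, hp⟩ with hp₀
  have hmk : ∀ t : ℕ, N₀.mkQ p₀ ∈ ((maximalIdeal R) ^ t • ⊤ : Submodule R (↥W ⧸ N₀)) := by
    intro t
    obtain ⟨a, haN, b, hb, hab⟩ := Submodule.mem_sup.mp (key t)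
    have hbW : b ∈ ((maximalIdeal R) ^ t • (⊤ : Submodule R ↥W)).map W.subtype := by
      rw [Submodule.map_smul'', Submodule.map_top, Submodule.range_subtype]
      exact hb
    obtain ⟨b', hb', hbeq⟩ := hbW
    have ha' : (⟨a, hNW haN⟩ : ↥W) ∈ N₀ := haN
    have hp0 : p₀ = ⟨a, hNW haN⟩ + b' := by
      have hcoe : ((⟨a, hNW haN⟩ + b' : ↥W) : MvPolynomial (Fin r) R) = a + b := by
        rw [Submodule.coe_add]
        exact congrArg (a + ·) hbeq
      apply Subtype.ext
      rw [hcoe]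
      exact hab.symm
    rw [hp0, map_add]
    have hz : N₀.mkQ ⟨a, hNW haN⟩ = 0 := (Submodule.Quotient.mk_eq_zero _).mpr ha'
    rw [hz, zero_add]
    have hmem : N₀.mkQ b' ∈ Submodule.map N₀.mkQ ((maximalIdeal R) ^ t • ⊤) :=
      ⟨b', hb', rfl⟩
    rw [Submodule.map_smul''] at hmem
    exact Submodule.smul_mono le_rfl le_top hmem
  have hmk0 : N₀.mkQ p₀ = 0 := by
    have := (Submodule.mem_iInf _).mpr hmk
    rw [hKrull] at this
    simpa using this
  have : p₀ ∈ N₀ := (Submodule.Quotient.mk_eq_zero _).mp hmk0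
  exact this

end Aux2

section Aux3

variable {R : Type} [CommRing R] [IsLocalRing R] {r : ℕ}

lemma closure_le_reesAlg (M : Submodule R (Fin r → R)) :
    ∀ h ∈ Submonoid.closure (linForm '' (M : Set (Fin r → R))),
      h ∈ (ReesAlg M).toSubmodule := by
  intro h hh
  rw [Subalgebra.mem_toSubmodule]
  induction hh using Submonoid.closure_induction with
  | mem u hu => exact Algebra.subset_adjoin hu
  | one => exact one_mem (ReesAlg M)
  | mul a b _ _ iha ihb => exact mul_mem iha ihb

lemma SnM_hat_le (M : Submodule R (Fin r → R)) (d : ℕ) :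
    SnM (hatModule M) d ≤ Submodule.span (AdicCompletion (maximalIdeal R) R)
      (MvPolynomial.map (algebraMap R (AdicCompletion (maximalIdeal R) R)) ''
        (SnM M d : Set (MvPolynomial (Fin r) R))) := by
  classical
  set Rh := AdicCompletion (maximalIdeal R) R
  set φ : MvPolynomial (Fin r) R →+* MvPolynomial (Fin r) Rh :=
    MvPolynomial.map (algebraMap R Rh) with hφdef
  set L : Set (MvPolynomial (Fin r) R) := linForm '' (M : Set (Fin r → R)) with hLdef
  set H : ℕ → Set (MvPolynomial (Fin r) R) :=
    fun m => {h | h ∈ Submonoid.closure L ∧ h ∈ homogeneousSubmodule (Fin r) R m} with hHdef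
  have hclos : ∀ x ∈ Submonoid.closure (linForm '' (hatModule M : Set (Fin r → Rh))),
      ∃ m, x ∈ Submodule.span Rh (φ '' H m) := by
    intro x hx
    induction hx using Submonoid.closure_induction with
    | mem z hz =>
      obtain ⟨v, hv, rfl⟩ := hz
      refine ⟨1, ?_⟩
      induction hv using Submodule.span_induction with
      | mem w hw =>
        obtain ⟨u, hu, rfl⟩ := hw
        rw [linForm_map]
        exact Submodule.subset_span
          ⟨linForm u, ⟨Submonoid.subset_closure ⟨u, hu, rfl⟩, linForm_mem_homog u⟩, rfl⟩
      | zero => rw [linForm_zero]; exact zero_mem _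
      | add a b _ _ iha ihb => rw [linForm_add]; exact add_mem iha ihb
      | smul c a _ ih => rw [linForm_smul]; exact Submodule.smul_mem _ _ ih
    | one =>
      exact ⟨0, Submodule.subset_span
        ⟨1, ⟨one_mem _, (mem_homogeneousSubmodule _ _).mpr (isHomogeneous_one _ _)⟩, map_one φ⟩⟩
    | mul z w _ _ ihz ihw =>
      obtain ⟨m₁, h₁⟩ := ihz
      obtain ⟨m₂, h₂⟩ := ihw
      refine ⟨m₁ + m₂, ?_⟩
      have hmul := Submodule.mul_mem_mul h₁ h₂
      rw [Submodule.span_mul_span] at hmul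
      refine Submodule.span_mono ?_ hmul
      rintro _ ⟨_, ⟨a, ⟨haC, haH⟩, rfl⟩, _, ⟨b, ⟨hbC, hbH⟩, rfl⟩, rfl⟩
      exact ⟨a * b, ⟨mul_mem haC hbC,
        homogeneousSubmodule_mul m₁ m₂ (Submodule.mul_mem_mul haH hbH)⟩, map_mul φ a b⟩
  intro x hx
  obtain ⟨hxA, hxH⟩ := Submodule.mem_inf.mp hx
  have hxA' : x ∈ Submodule.span Rh
      ↑(Submonoid.closure (linForm '' ((hatModule M : Set (Fin r → Rh))))) := by
    unfold ReesAlg at hxA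
    rw [Algebra.adjoin_eq_span] at hxA
    exact hxA
  suffices hcomp : homogeneousComponent d x ∈
      Submodule.span Rh (φ '' (SnM M d : Set (MvPolynomial (Fin r) R))) by
    rwa [homogeneousComponent_of_mem hxH, if_pos rfl] at hcomp
  clear hx hxA hxH
  induction hxA' using Submodule.span_induction with
  | mem z hz =>
    obtain ⟨m, hm⟩ := hclos z hz
    have hzH : z ∈ homogeneousSubmodule (Fin r) Rh m := by
      refine Submodule.span_le.mpr ?_ hm
      rintro _ ⟨hh, ⟨_, hhH⟩, rfl⟩
      exact (mem_homogeneousSubmodule _ _).mpr (((mem_homogeneousSubmodule _ _).mp hhH).map _)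
    rw [homogeneousComponent_of_mem hzH]
    by_cases hdm : d = m
    · rw [if_pos hdm]; subst hdm
      refine Submodule.span_mono ?_ hm
      rintro _ ⟨hh, ⟨hhC, hhH⟩, rfl⟩
      exact ⟨hh, Submodule.mem_inf.mpr ⟨closure_le_reesAlg M hh hhC, hhH⟩, rfl⟩
    · rw [if_neg hdm]; exact zero_mem _
  | zero => rw [map_zero]; exact zero_mem _
  | add a b _ _ iha ihb => rw [map_add]; exact add_mem iha ihb
  | smul c a _ ih => rw [map_smul]; exact Submodule.smul_mem _ _ ih

lemma map_SnM_le (M : Submodule R (Fin r → R)) (d : ℕ) :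
    ∀ a ∈ SnM M d,
      MvPolynomial.map (algebraMap R (AdicCompletion (maximalIdeal R) R)) a ∈
        SnM (hatModule M) d := by
  intro a ha
  set Rh := AdicCompletion (maximalIdeal R) R
  obtain ⟨haA, haH⟩ := Submodule.mem_inf.mp ha
  refine Submodule.mem_inf.mpr ⟨?_, (mem_homogeneousSubmodule _ _).mpr
    (((mem_homogeneousSubmodule _ _).mp haH).map _)⟩
  rw [Subalgebra.mem_toSubmodule] at haA ⊢
  unfold ReesAlg at haA
  clear ha haH
  induction haA using Algebra.adjoin_induction with
  | mem z hz =>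
    obtain ⟨v, hv, rfl⟩ := hz
    rw [← linForm_map]
    exact Algebra.subset_adjoin
      ⟨fun i => algebraMap R Rh (v i), Submodule.subset_span ⟨v, hv, rfl⟩, rfl⟩
  | algebraMap rr =>
    rw [MvPolynomial.algebraMap_eq, MvPolynomial.map_C]
    exact Subalgebra.algebraMap_mem _ _
  | add a b _ _ iha ihb => rw [map_add]; exact add_mem iha ihb
  | mul a b _ _ iha ihb => rw [map_mul]; exact mul_mem iha ihb

end Aux3


/-- For `M ⊆ F = Rʳ` over a Noetherian local ring `R` with completion `R̂`, and `n ≥ k`,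
the intersection of `S_{n-k}(M̂)·S_k(F̂)` with `Sₙ(F)` inside `Sₙ(F̂)` is `S_{n-k}(M)·S_k(F)`:
a homogeneous polynomial `p` of degree `n` over `R` lies in `S_{n-k}(M̂)·S_k(F̂)` after
extension of scalars iff it lies in `S_{n-k}(M)·S_k(F)`. -/
theorem completion_intersection {R : Type} [CommRing R] [IsNoetherianRing R] [IsLocalRing R]
    {r : ℕ} (M : Submodule R (Fin r → R)) (n k : ℕ) (hk : k ≤ n)
    (p : MvPolynomial (Fin r) R) (hp : p ∈ homogeneousSubmodule (Fin r) R n) :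
    MvPolynomial.map (algebraMap R (AdicCompletion (maximalIdeal R) R)) p ∈
        SnM (hatModule M) (n - k) *
          homogeneousSubmodule (Fin r) (AdicCompletion (maximalIdeal R) R) k
      ↔ p ∈ SnM M (n - k) * homogeneousSubmodule (Fin r) R k := by
  set Rh := AdicCompletion (maximalIdeal R) R
  set N := SnM M (n - k) * homogeneousSubmodule (Fin r) R k with hN
  have hNW : N ≤ homogeneousSubmodule (Fin r) R n := by
    have h1 : N ≤ homogeneousSubmodule (Fin r) R (n - k) * homogeneousSubmodule (Fin r) R k :=
      mul_le_mul' inf_le_right le_rfl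
    have h2 := homogeneousSubmodule_mul (σ := Fin r) (R := R) (n - k) k
    rw [Nat.sub_add_cancel hk] at h2
    exact h1.trans h2
  constructor
  · intro h
    have hT : MvPolynomial.map (algebraMap R Rh) p ∈
        Submodule.span Rh (MvPolynomial.map (algebraMap R Rh) ''
          (N : Set (MvPolynomial (Fin r) R))) := by
      have hle := mul_le_mul' (SnM_hat_le M (n - k))
        (homog_le_span_map (algebraMap R Rh) k)
      have hsp := hle h
      rw [Submodule.span_mul_span] at hsp
      refine Submodule.span_mono ?_ hsp
      rintro _ ⟨_, ⟨a, ha, rfl⟩, _, ⟨b, hb, rfl⟩, rfl⟩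
      exact ⟨a * b, Submodule.mul_mem_mul ha hb, map_mul _ a b⟩
    exact span_descent n N hNW p hp hT
  · intro h
    refine Submodule.mul_induction_on h ?_ ?_
    · intro a ha b hb
      rw [map_mul]
      exact Submodule.mul_mem_mul (map_SnM_le M (n - k) a ha)
        ((mem_homogeneousSubmodule _ _).mpr (((mem_homogeneousSubmodule _ _).mp hb).map _))
    · intro x y hx hy
      rw [map_add]; exact add_mem hx hy
end

section
/- Let (R, 𝔪) be a Noetherian local ring, F free of rank r with basis T₁,…,T_r, and M ⊆ F generated by elements L₁,…,L_d each of whose T₁-coefficient lies in 𝔪. Then for any n ≥ k ≥ 0, the annihilator of the R-module Sₙ(F)/(S_{n-k}(M)·S_k(F)) is contained in 𝔪^{n-k}. -/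
set_option maxHeartbeats 1000000
set_option synthInstance.maxHeartbeats 400000
open MvPolynomial IsLocalRing

lemma fin1_degree (u : Fin 1 →₀ ℕ) : u.degree = u 0 := by
  rw [Finsupp.degree_apply]
  rw [Finset.sum_subset (Finset.subset_univ u.support)
    (by intro i _ h; simpa [Finsupp.mem_support_iff] using h)]
  simp [Fin.sum_univ_one]

lemma aux_rees_coeff {R : Type} [CommRing R] [IsLocalRing R] {r : ℕ} (e : Fin r)
    (M : Submodule R (Fin r → R)) (hMe : ∀ v ∈ M, v e ∈ maximalIdeal R)
    {s : MvPolynomial (Fin r) R} (hs : s ∈ ReesAlg M) :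
    ∀ u : Fin 1 →₀ ℕ,
      coeff u (aeval (fun i => if i = e then (X 0 : MvPolynomial (Fin 1) R) else 0) s)
        ∈ maximalIdeal R ^ (u 0) := by
  induction hs using Algebra.adjoin_induction with
  | mem p hp =>
    obtain ⟨v, hv, rfl⟩ := hp
    intro u
    have : aeval (fun i => if i = e then (X 0 : MvPolynomial (Fin 1) R) else 0) (linForm v)
        = C (v e) * X 0 := by
      simp [linForm, map_sum, Finset.sum_ite_eq', apply_ite (C (v e) * ·)]
    rw [this, coeff_C_mul, coeff_X']
    split
    · rename_i h
      have : u 0 = 1 := by rw [← h]; simp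
      rw [this, pow_one, mul_one]
      exact hMe v hv
    · simp
  | algebraMap a =>
    intro u
    have : aeval (fun i => if i = e then (X 0 : MvPolynomial (Fin 1) R) else 0)
        ((algebraMap R (MvPolynomial (Fin r) R)) a) = C a := by simp
    rw [this, coeff_C]
    split
    · rename_i h
      have : u 0 = 0 := by rw [← h]; simp
      rw [this, pow_zero, Ideal.one_eq_top]
      exact Submodule.mem_top
    · exact zero_mem _
  | add p q hp hq ihp ihq =>
    intro u
    rw [map_add, coeff_add]
    exact add_mem (ihp u) (ihq u)
  | mul p q hp hq ihp ihq =>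
    intro u
    rw [map_mul, coeff_mul]
    apply Submodule.sum_mem
    rintro ⟨a, b⟩ hab
    rw [Finset.HasAntidiagonal.mem_antidiagonal] at hab
    have h0 : a 0 + b 0 = u 0 := by rw [← hab]; simp
    rw [← h0, pow_add]
    exact Ideal.mul_mem_mul (ihp a) (ihq b)

/-- Let `(R, 𝔪)` be Noetherian local, `F = Rʳ` with standard basis `T₁,…,T_r`, and `M`
generated by `L₁,…,L_d` each of whose `T₁`-coefficient lies in `𝔪`. Then for `n ≥ k` the
annihilator of `Sₙ(F)/(S_{n-k}(M)·S_k(F))` is contained in `𝔪^{n-k}`. -/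
theorem annihilator_le_pow_maximalIdeal {R : Type} [CommRing R] [IsNoetherianRing R]
    [IsLocalRing R] {r d : ℕ} (hr : 0 < r)
    (L : Fin d → (Fin r → R)) (hL : ∀ j, L j ⟨0, hr⟩ ∈ maximalIdeal R)
    (M : Submodule R (Fin r → R)) (hM : M = Submodule.span R (Set.range L))
    (n k : ℕ) (hk : k ≤ n) (x : R)
    (hx : ∀ p ∈ homogeneousSubmodule (Fin r) R n,
      C x * p ∈ SnM M (n - k) * homogeneousSubmodule (Fin r) R k) :
    x ∈ maximalIdeal R ^ (n - k) := by
  set e : Fin r := ⟨0, hr⟩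
  set ev : MvPolynomial (Fin r) R →ₐ[R] MvPolynomial (Fin 1) R :=
    aeval (fun i => if i = e then (X 0 : MvPolynomial (Fin 1) R) else 0) with hev
  have hMe : ∀ v ∈ M, v e ∈ maximalIdeal R := by
    intro v hv
    rw [hM] at hv
    induction hv using Submodule.span_induction with
    | mem w hw => obtain ⟨j, rfl⟩ := hw; exact hL j
    | zero => simp
    | add w₁ w₂ _ _ ih1 ih2 => exact add_mem ih1 ih2
    | smul a w _ ih => exact Ideal.mul_mem_left _ a ih
  have hmem := hx ((X e : MvPolynomial (Fin r) R) ^ n) (isHomogeneous_X_pow e n)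
  have key : coeff (Finsupp.single 0 n) (ev (C x * X e ^ n)) ∈ maximalIdeal R ^ (n - k) := by
    refine Submodule.mul_induction_on hmem ?_ ?_
    · intro s hs q hq
      rw [map_mul, coeff_mul]
      apply Submodule.sum_mem
      rintro ⟨a, b⟩ hab
      rw [Finset.HasAntidiagonal.mem_antidiagonal] at hab
      have hq' : (ev q).IsHomogeneous (1 * k) := by
        apply MvPolynomial.IsHomogeneous.aeval hq
        intro i
        split
        · exact isHomogeneous_X _ _
        · exact isHomogeneous_zero _ _ _
      by_cases hbk : b 0 = k
      · have hab0 : a 0 + b 0 = n := by simpa using DFunLike.congr_fun hab (0 : Fin 1)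
        have ha0 : a 0 = n - k := by omega
        have := aux_rees_coeff e M hMe hs.1 a
        rw [ha0] at this
        exact Ideal.mul_mem_right _ _ this
      · have : coeff b (ev q) = 0 := by
          apply hq'.coeff_eq_zero
          rw [fin1_degree]
          omega
        rw [this, mul_zero]
        exact zero_mem _
    · intro y z hy hz
      rw [map_add, coeff_add]
      exact add_mem hy hz
  have hevx : ev (C x * X e ^ n) = C x * (X 0 : MvPolynomial (Fin 1) R) ^ n := by
    simp [hev]
  rw [hevx, coeff_C_mul, coeff_X_pow] at key
  simpa using key
end
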